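/- arXiv:1809.10106 — 5 statements merged into one kernel-verified Lean document; each statement's English description precedes it below -/
import Mathlib

section
/- There exist a workflow authorization policy W = (S, ≼, U, A, C) and an integer budget t ≥ 0 such that W is statically resilient for budget t but W is not one-shot resilient for budget t. -/
/-- A workflow authorization policy `W = (S, ≼, U, A, C)`:
steps `S`, an ordering relation `ord` (the partial order `≼`), users `U`,
a step authorization relation `A ⊆ S × U`, and a set `C` of constraints.
A constraint is a pair `(T, Θ)` where `T ⊆ S` and `Θ` is a set of functions
from `T` to `U` (represented as `σ → Option υ` with domain exactly `T`). -/
structure WAP (σ υ : Type) where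
  S : Finset σ
  ord : σ → σ → Prop
  U : Finset υ
  A : Set (σ × υ)
  C : Set (Finset σ × Set (σ → Option υ))

namespace WAP

variable {σ υ : Type} [DecidableEq σ] [DecidableEq υ]

/-- Well-formedness: `ord` is a partial order on `S`, `A ⊆ S × U`, and every
constraint `(T, Θ)` has `T ⊆ S` and `Θ` a set of functions from `T` to `U`. -/
def WellFormed (W : WAP σ υ) : Prop :=
  (∀ s ∈ W.S, W.ord s s) ∧
  (∀ s₁ ∈ W.S, ∀ s₂ ∈ W.S, W.ord s₁ s₂ → W.ord s₂ s₁ → s₁ = s₂) ∧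
  (∀ s₁ ∈ W.S, ∀ s₂ ∈ W.S, ∀ s₃ ∈ W.S, W.ord s₁ s₂ → W.ord s₂ s₃ → W.ord s₁ s₃) ∧
  (∀ p ∈ W.A, p.1 ∈ W.S ∧ p.2 ∈ W.U) ∧
  (∀ c ∈ W.C, c.1 ⊆ W.S ∧
    ∀ θ ∈ c.2, (∀ s, θ s ≠ none ↔ s ∈ c.1) ∧ ∀ s u, θ s = some u → u ∈ W.U)

/-- A partial plan: a partial function from `S` to `U` whose domain is
causally closed (if `s₁` is assigned and `s₂ ≺ s₁` then `s₂` is assigned). -/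
def IsPartialPlan (W : WAP σ υ) (θ : σ → Option υ) : Prop :=
  (∀ s u, θ s = some u → s ∈ W.S ∧ u ∈ W.U) ∧
  ∀ s₁ s₂, s₁ ∈ W.S → s₂ ∈ W.S → θ s₁ ≠ none → W.ord s₂ s₁ → s₂ ≠ s₁ → θ s₂ ≠ none

/-- Restriction of a partial plan to a set `T` of steps. -/
def restrictTo (θ : σ → Option υ) (T : Finset σ) : σ → Option υ :=
  fun s => if s ∈ T then θ s else none

/-- Validity of a (partial) plan: every assignment is authorized, and every
constraint whose step set is contained in the domain is satisfied. -/
def Valid (W : WAP σ υ) (θ : σ → Option υ) : Prop :=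
  (∀ s u, θ s = some u → (s, u) ∈ W.A) ∧
  ∀ c ∈ W.C, (∀ s ∈ c.1, θ s ≠ none) → restrictTo θ c.1 ∈ c.2

/-- A plan: a partial plan whose domain is all of `S`. -/
def IsPlan (W : WAP σ υ) (θ : σ → Option υ) : Prop :=
  W.IsPartialPlan θ ∧ ∀ s ∈ W.S, θ s ≠ none

def IsValidPlan (W : WAP σ υ) (θ : σ → Option υ) : Prop :=
  W.IsPlan θ ∧ W.Valid θ

/-- `θ` assigns no user from `Δ`. -/
def Avoids (θ : σ → Option υ) (Δ : Finset υ) : Prop :=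
  ∀ s u, θ s = some u → u ∉ Δ

/-- Static resiliency for budget `t`. -/
def StaticallyResilient (W : WAP σ υ) (t : ℕ) : Prop :=
  ∀ Δ : Finset υ, Δ ⊆ W.U → Δ.card ≤ t → ∃ θ, W.IsValidPlan θ ∧ Avoids θ Δ

/-- A move of Player 1: assign a user `u ∈ U ∖ Δ` to a not-yet-assigned step,
so that the result remains a causally closed partial plan and remains valid
(if the extension were invalid, Player 2 would win at once). -/
def P1Move (W : WAP σ υ) (Δ : Finset υ) (θ θ' : σ → Option υ) : Prop :=
  ∃ s u, s ∈ W.S ∧ θ s = none ∧ u ∈ W.U ∧ u ∉ Δ ∧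
    θ' = Function.update θ s (some u) ∧
    W.IsPartialPlan θ' ∧ W.Valid θ'

/-- A move of Player 2 in the one-shot resiliency game: either pass, or
(if it has not yet struck) strike, adding at most `t` users of `U` to `Δ`. -/
def OneShotP2Move (W : WAP σ υ) (t : ℕ) (Δ : Finset υ) (struck : Bool)
    (Δ' : Finset υ) (struck' : Bool) : Prop :=
  (Δ' = Δ ∧ struck' = struck) ∨
  (struck = false ∧ struck' = true ∧ Δ ⊆ Δ' ∧ Δ' ⊆ W.U ∧ (Δ' \ Δ).card ≤ t)

/-- Player 1 can force a win of the one-shot resiliency game within `n`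
more rounds, from the given configuration (`struck` records whether
Player 2 has already struck).  Player 1 has won once the (valid) partial
plan has been extended to a valid plan on all of `S`; otherwise, for every
move of Player 2 there must be a move of Player 1 from which Player 1 can
still force a win.  Since each round assigns one more step, the game from
the initial configuration lasts at most `|S|` rounds. -/
def OneShotWins (W : WAP σ υ) (t : ℕ) :
    ℕ → Finset υ → (σ → Option υ) → Bool → Prop
  | 0, _, θ, _ => (∀ s ∈ W.S, θ s ≠ none) ∧ W.IsPartialPlan θ ∧ W.Valid θ
  | n + 1, Δ, θ, struck =>
      ((∀ s ∈ W.S, θ s ≠ none) ∧ W.IsPartialPlan θ ∧ W.Valid θ) ∨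
      ((∃ s ∈ W.S, θ s = none) ∧
        ∀ Δ' struck', OneShotP2Move W t Δ struck Δ' struck' →
          ∃ θ', P1Move W Δ' θ θ' ∧ OneShotWins W t n Δ' θ' struck')

/-- One-shot resiliency for budget `t`: Player 1 wins the one-shot
resiliency game (from the initial configuration `(∅, ∅)`) no matter how
Player 2 plays. -/
def OneShotResilient (W : WAP σ υ) (t : ℕ) : Prop :=
  OneShotWins W t W.S.card ∅ (fun _ => none) false

/-- A move of Player 2 in the decremental resiliency game: add zero or more
users of `U` to `Δ`, subject to `|Δ| ≤ t` throughout. -/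
def DecP2Move (W : WAP σ υ) (t : ℕ) (Δ Δ' : Finset υ) : Prop :=
  Δ ⊆ Δ' ∧ Δ' ⊆ W.U ∧ Δ'.card ≤ t

/-- Player 1 can force a win of the decremental resiliency game within `n`
more rounds. -/
def DecWins (W : WAP σ υ) (t : ℕ) : ℕ → Finset υ → (σ → Option υ) → Prop
  | 0, _, θ => (∀ s ∈ W.S, θ s ≠ none) ∧ W.IsPartialPlan θ ∧ W.Valid θ
  | n + 1, Δ, θ =>
      ((∀ s ∈ W.S, θ s ≠ none) ∧ W.IsPartialPlan θ ∧ W.Valid θ) ∨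
      ((∃ s ∈ W.S, θ s = none) ∧
        ∀ Δ', DecP2Move W t Δ Δ' →
          ∃ θ', P1Move W Δ' θ θ' ∧ DecWins W t n Δ' θ')

/-- Decremental resiliency for budget `t`: Player 1 wins the decremental
resiliency game no matter how Player 2 plays. -/
def DecrementallyResilient (W : WAP σ υ) (t : ℕ) : Prop :=
  DecWins W t W.S.card ∅ (fun _ => none)

end WAP

namespace CounterEx

/-- The counterexample policy: steps `{1,2}`, users `{0,1}`, trivial order,
full authorization, and a binding-of-duty constraint (both steps must get
the same user). -/
def Theta : Set (ℕ → Option ℕ) :=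
  {θ | ∃ u, (u = 0 ∨ u = 1) ∧ θ = fun s => if s = 1 ∨ s = 2 then some u else none}

def W : WAP ℕ ℕ where
  S := {1, 2}
  ord := Eq
  U := {0, 1}
  A := {p | (p.1 = 1 ∨ p.1 = 2) ∧ (p.2 = 0 ∨ p.2 = 1)}
  C := {({1, 2}, Theta)}

lemma memS (s : ℕ) : s ∈ W.S ↔ s = 1 ∨ s = 2 := by
  simp [W, Finset.mem_insert]

lemma memU (u : ℕ) : u ∈ W.U ↔ u = 0 ∨ u = 1 := by
  simp [W, Finset.mem_insert]

lemma wf : W.WellFormed := by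
  refine ⟨fun s _ => rfl, fun s₁ _ s₂ _ h _ => h,
    fun s₁ _ s₂ _ s₃ _ h h' => h.trans h', ?_, ?_⟩
  · rintro ⟨s, u⟩ ⟨hs, hu⟩
    exact ⟨(memS s).2 hs, (memU u).2 hu⟩
  · rintro c hc
    rcases hc with rfl
    refine ⟨subset_rfl, ?_⟩
    rintro θ ⟨u, hu, rfl⟩
    constructor
    · intro s
      by_cases h : s = 1 ∨ s = 2 <;> simp [h, memS]
    · intro s v hv
      by_cases h : s = 1 ∨ s = 2 <;> simp [h] at hv
      subst hv
      exact (memU u).2 hu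

/-- The constant plan assigning `u` to both steps. -/
def pl (u : ℕ) : ℕ → Option ℕ := fun s => if s = 1 ∨ s = 2 then some u else none

lemma pl_valid (u : ℕ) (hu : u = 0 ∨ u = 1) : W.IsValidPlan (pl u) := by
  refine ⟨⟨⟨?_, ?_⟩, ?_⟩, ?_, ?_⟩
  · intro s v hv
    by_cases h : s = 1 ∨ s = 2 <;> simp [pl, h] at hv
    subst hv
    exact ⟨(memS s).2 h, (memU u).2 hu⟩
  · intro s₁ s₂ _ _ _ hord hne
    exact absurd hord hne
  · intro s hs
    simp [pl, (memS s).1 hs]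
  · intro s v hv
    by_cases h : s = 1 ∨ s = 2 <;> simp [pl, h] at hv
    subst hv
    exact ⟨h, hu⟩
  · rintro c hc _
    rcases hc with rfl
    refine ⟨u, hu, ?_⟩
    funext s
    by_cases h : s = 1 ∨ s = 2
    · rcases h with rfl | rfl <;> simp [WAP.restrictTo, pl]
    · push_neg at h
      simp [WAP.restrictTo, pl, h.1, h.2, Finset.mem_insert]

lemma static : W.StaticallyResilient 1 := by
  intro Δ hΔ hcard
  have : ∃ u, (u = 0 ∨ u = 1) ∧ u ∉ Δ := by
    by_cases h0 : 0 ∈ Δ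
    · by_cases h1 : 1 ∈ Δ
      · exfalso
        have hsub : ({0, 1} : Finset ℕ) ⊆ Δ := by
          intro x hx
          rcases Finset.mem_insert.1 hx with rfl | hx
          · exact h0
          · rcases Finset.mem_singleton.1 hx with rfl
            exact h1
        have := Finset.card_le_card hsub
        simp at this
        omega
      · exact ⟨1, Or.inr rfl, h1⟩
    · exact ⟨0, Or.inl rfl, h0⟩
  obtain ⟨u, hu, hnot⟩ := this
  refine ⟨pl u, pl_valid u hu, ?_⟩
  intro s v hv
  by_cases h : s = 1 ∨ s = 2 <;> simp [pl, h] at hv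
  subst hv
  exact hnot

lemma cardS : W.S.card = 2 := by decide

lemma not_oneShot : ¬ W.OneShotResilient 1 := by
  intro h
  rw [WAP.OneShotResilient, cardS] at h
  -- unfold round 1
  rcases h with ⟨hfull, _⟩ | ⟨_, H⟩
  · exact hfull 1 ((memS 1).2 (Or.inl rfl)) rfl
  -- Player 2 passes
  obtain ⟨θ', ⟨s, u, hs, hθs, hu, _, hθ'def, _, _⟩, hwin⟩ :=
    H ∅ false (Or.inl ⟨rfl, rfl⟩)
  -- the other step is still unassigned
  have hs12 := (memS s).1 hs
  set s' : ℕ := if s = 1 then 2 else 1 with hs'def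
  have hs' : s' ∈ W.S := by
    rcases hs12 with rfl | rfl <;> simp [hs'def, memS]
  have hne : s' ≠ s := by
    rcases hs12 with rfl | rfl <;> simp [hs'def]
  have hθ's' : θ' s' = none := by
    rw [hθ'def, Function.update_of_ne hne]
  rcases hwin with ⟨hfull, _⟩ | ⟨_, H2⟩
  · exact hfull s' hs' hθ's'
  -- Player 2 strikes {u}
  have hmove : WAP.OneShotP2Move W 1 ∅ false {u} true := by
    refine Or.inr ⟨rfl, rfl, Finset.empty_subset _, ?_, ?_⟩
    · intro x hx
      rcases Finset.mem_singleton.1 hx with rfl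
      exact hu
    · simp
  obtain ⟨θ'', ⟨s₂, u', hs₂, hθ's₂, hu', hu'ne, hθ''def, _, hval⟩, _⟩ :=
    H2 {u} true hmove
  have hu'u : u' ≠ u := fun h => hu'ne (by simp [h])
  have hs₂ne : s₂ ≠ s := by
    intro h
    rw [h, hθ'def, Function.update_self] at hθ's₂
    exact Option.some_ne_none _ hθ's₂
  have hθ''s : θ'' s = some u := by
    rw [hθ''def, Function.update_of_ne (fun h => hs₂ne h.symm), hθ'def,
      Function.update_self]
  have hθ''s₂ : θ'' s₂ = some u' := by
    rw [hθ''def, Function.update_self]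
  -- every step of {1,2} is s or s₂
  have hcover : ∀ x, x = 1 ∨ x = 2 → x = s ∨ x = s₂ := by
    have hs₂12 := (memS s₂).1 hs₂
    intro x hx
    rcases hx with rfl | rfl <;> rcases hs12 with rfl | rfl <;>
      rcases hs₂12 with rfl | rfl <;> simp_all
  have hdom : ∀ x ∈ ({1, 2} : Finset ℕ), θ'' x ≠ none := by
    intro x hx
    have : x = 1 ∨ x = 2 := by
      rcases Finset.mem_insert.1 hx with rfl | hx
      · exact Or.inl rfl
      · exact Or.inr (Finset.mem_singleton.1 hx)
    rcases hcover x this with rfl | rfl <;> simp [hθ''s, hθ''s₂]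
  have hmem : (({1, 2} : Finset ℕ), Theta) ∈ W.C := rfl
  obtain ⟨w, _, heq⟩ := hval.2 _ hmem hdom
  have h1 : θ'' s = some w := by
    have := congrFun heq s
    simpa [WAP.restrictTo, hs12, show s ∈ ({1, 2} : Finset ℕ) from hs] using this
  have h2 : θ'' s₂ = some w := by
    have := congrFun heq s₂
    simpa [WAP.restrictTo, (memS s₂).1 hs₂,
      show s₂ ∈ ({1, 2} : Finset ℕ) from hs₂] using this
  rw [hθ''s] at h1
  rw [hθ''s₂] at h2
  exact hu'u (by rw [Option.some_inj.1 h2, ← Option.some_inj.1 h1])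

end CounterEx

/-- There exist a workflow authorization policy `W` and a
budget `t ≥ 0` such that `W` is statically resilient for budget `t` but not
one-shot resilient for budget `t`. -/
theorem exists_statically_resilient_not_oneShot_resilient :
    ∃ (W : WAP ℕ ℕ) (t : ℕ), W.WellFormed ∧
      W.StaticallyResilient t ∧ ¬ W.OneShotResilient t :=
  ⟨CounterEx.W, 1, CounterEx.wf, CounterEx.static, CounterEx.not_oneShot⟩
end

section
/- There exist a workflow authorization policy W = (S, ≼, U, A, C) and an integer budget t ≥ 0 such that W is one-shot resilient for budget t but W is not decrementally resilient for budget t. -/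
section CE
open WAP

/-- The allowed pair `(u,v)` as a function with domain `{1,2}`. -/
def pf (u v : ℕ) : ℕ → Option ℕ := fun s => if s = 1 then some u else if s = 2 then some v else none

def Th : Set (ℕ → Option ℕ) := {pf 0 3, pf 0 4, pf 0 5, pf 1 6, pf 2 7}

def Wc : WAP ℕ ℕ where
  S := {1, 2}
  ord := Eq
  U := Finset.range 8
  A := {p | (p.1 = 1 ∧ (p.2 = 0 ∨ p.2 = 1 ∨ p.2 = 2)) ∨
        (p.1 = 2 ∧ (p.2 = 3 ∨ p.2 = 4 ∨ p.2 = 5 ∨ p.2 = 6 ∨ p.2 = 7))}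
  C := {({1,2}, Th)}

def OK (u v : ℕ) : Prop :=
  (u = 0 ∧ v = 3) ∨ (u = 0 ∧ v = 4) ∨ (u = 0 ∧ v = 5) ∨ (u = 1 ∧ v = 6) ∨ (u = 2 ∧ v = 7)

def th0 : ℕ → Option ℕ := fun _ => none
def tha (u : ℕ) : ℕ → Option ℕ := Function.update th0 1 (some u)
def thb (u v : ℕ) : ℕ → Option ℕ := Function.update (tha u) 2 (some v)

lemma tha_eval (u s : ℕ) : tha u s = if s = 1 then some u else none := by
  rw [tha, Function.update_apply]; rfl

lemma thb_eval (u v s : ℕ) :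
    thb u v s = if s = 2 then some v else if s = 1 then some u else none := by
  rw [thb, Function.update_apply, tha_eval]

lemma mem_S_iff (s : ℕ) : s ∈ Wc.S ↔ s = 1 ∨ s = 2 := by
  simp [Wc]

lemma mem_U_iff (u : ℕ) : u ∈ Wc.U ↔ u < 8 := by
  simp [Wc]

lemma mem_C_iff (c : Finset ℕ × Set (ℕ → Option ℕ)) : c ∈ Wc.C ↔ c = ({1,2}, Th) := by
  simp [Wc]

lemma okA1 {u v : ℕ} (h : OK u v) : ((1 : ℕ), u) ∈ Wc.A := by
  rcases h with ⟨rfl, rfl⟩ | ⟨rfl, rfl⟩ | ⟨rfl, rfl⟩ | ⟨rfl, rfl⟩ | ⟨rfl, rfl⟩ <;> simp [Wc]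

lemma okA2 {u v : ℕ} (h : OK u v) : ((2 : ℕ), v) ∈ Wc.A := by
  rcases h with ⟨rfl, rfl⟩ | ⟨rfl, rfl⟩ | ⟨rfl, rfl⟩ | ⟨rfl, rfl⟩ | ⟨rfl, rfl⟩ <;> simp [Wc]

lemma okU1 {u v : ℕ} (h : OK u v) : u ∈ Wc.U := by
  rw [mem_U_iff]; rcases h with ⟨rfl, rfl⟩ | ⟨rfl, rfl⟩ | ⟨rfl, rfl⟩ | ⟨rfl, rfl⟩ | ⟨rfl, rfl⟩ <;> omega

lemma okU2 {u v : ℕ} (h : OK u v) : v ∈ Wc.U := by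
  rw [mem_U_iff]; rcases h with ⟨rfl, rfl⟩ | ⟨rfl, rfl⟩ | ⟨rfl, rfl⟩ | ⟨rfl, rfl⟩ | ⟨rfl, rfl⟩ <;> omega

lemma okTh {u v : ℕ} (h : OK u v) : pf u v ∈ Th := by
  rcases h with ⟨rfl, rfl⟩ | ⟨rfl, rfl⟩ | ⟨rfl, rfl⟩ | ⟨rfl, rfl⟩ | ⟨rfl, rfl⟩ <;> simp [Th]

lemma pp_of (θ : ℕ → Option ℕ) (h : ∀ s u, θ s = some u → s ∈ Wc.S ∧ u ∈ Wc.U) :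
    Wc.IsPartialPlan θ := by
  refine ⟨h, fun s₁ s₂ _ _ _ hord hne => ?_⟩
  exact absurd hord hne

lemma pp_a {u v : ℕ} (h : OK u v) : Wc.IsPartialPlan (tha u) := by
  refine pp_of _ fun s w hw => ?_
  rw [tha_eval] at hw
  by_cases hs : s = 1
  · subst hs
    rw [if_pos rfl] at hw
    injection hw with hw
    subst hw
    exact ⟨by rw [mem_S_iff]; left; rfl, okU1 h⟩
  · rw [if_neg hs] at hw
    exact absurd hw (by simp)

lemma pp_b {u v : ℕ} (h : OK u v) : Wc.IsPartialPlan (thb u v) := by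
  refine pp_of _ fun s w hw => ?_
  rw [thb_eval] at hw
  by_cases h2 : s = 2
  · subst h2
    rw [if_pos rfl] at hw
    injection hw with hw
    subst hw
    exact ⟨by rw [mem_S_iff]; right; rfl, okU2 h⟩
  · by_cases h1 : s = 1
    · subst h1
      rw [if_neg (by omega : (1:ℕ) ≠ 2), if_pos rfl] at hw
      injection hw with hw
      subst hw
      exact ⟨by rw [mem_S_iff]; left; rfl, okU1 h⟩
    · rw [if_neg h2, if_neg h1] at hw
      exact absurd hw (by simp)

lemma valid_a {u v : ℕ} (h : OK u v) : Wc.Valid (tha u) := by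
  constructor
  · intro s w hw
    rw [tha_eval] at hw
    by_cases hs : s = 1
    · subst hs
      rw [if_pos rfl] at hw
      injection hw with hw
      subst hw
      exact okA1 h
    · rw [if_neg hs] at hw
      exact absurd hw (by simp)
  · intro c hc hdom
    rw [mem_C_iff] at hc
    subst hc
    exact absurd (hdom 2 (by simp)) (by simp [tha_eval])

lemma restrict_b (u v : ℕ) : restrictTo (thb u v) {1, 2} = pf u v := by
  funext s
  by_cases h1 : s = 1
  · subst h1; simp [WAP.restrictTo, thb_eval, pf]
  · by_cases h2 : s = 2
    · subst h2; simp [WAP.restrictTo, thb_eval, pf]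
    · simp [WAP.restrictTo, thb_eval, pf, h1, h2]

lemma valid_b {u v : ℕ} (h : OK u v) : Wc.Valid (thb u v) := by
  constructor
  · intro s w hw
    rw [thb_eval] at hw
    by_cases h2 : s = 2
    · subst h2
      rw [if_pos rfl] at hw
      injection hw with hw
      subst hw
      exact okA2 h
    · by_cases h1 : s = 1
      · subst h1
        rw [if_neg (by omega : (1:ℕ) ≠ 2), if_pos rfl] at hw
        injection hw with hw
        subst hw
        exact okA1 h
      · rw [if_neg h2, if_neg h1] at hw
        exact absurd hw (by simp)
  · intro c hc _
    rw [mem_C_iff] at hc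
    subst hc
    show restrictTo (thb u v) {1, 2} ∈ Th
    rw [restrict_b]
    exact okTh h

lemma full_b (u v : ℕ) : ∀ s ∈ Wc.S, thb u v s ≠ none := by
  intro s hs
  rw [mem_S_iff] at hs
  rcases hs with rfl | rfl <;> simp [thb_eval]

lemma done_b {u v : ℕ} (h : OK u v) :
    (∀ s ∈ Wc.S, thb u v s ≠ none) ∧ Wc.IsPartialPlan (thb u v) ∧ Wc.Valid (thb u v) :=
  ⟨full_b u v, pp_b h, valid_b h⟩

lemma move_a {Δ : Finset ℕ} {u v : ℕ} (h : OK u v) (hu : u ∉ Δ) : P1Move Wc Δ th0 (tha u) :=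
  ⟨1, u, by rw [mem_S_iff]; left; rfl, rfl, okU1 h, hu, rfl, pp_a h, valid_a h⟩

lemma move_b {Δ : Finset ℕ} {u v : ℕ} (h : OK u v) (hv : v ∉ Δ) :
    P1Move Wc Δ (tha u) (thb u v) :=
  ⟨2, v, by rw [mem_S_iff]; right; rfl, by simp [tha_eval], okU2 h, hv, rfl, pp_b h, valid_b h⟩

lemma exists_v (Δ : Finset ℕ) (h : Δ.card ≤ 2) :
    ∃ v, (v = 3 ∨ v = 4 ∨ v = 5) ∧ v ∉ Δ := by
  by_contra hc
  push_neg at hc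
  have hsub : ({3, 4, 5} : Finset ℕ) ⊆ Δ := by
    intro x hx
    simp only [Finset.mem_insert, Finset.mem_singleton] at hx
    exact hc x hx
  have h3 : ({3, 4, 5} : Finset ℕ).card = 3 := by decide
  have := Finset.card_le_card hsub
  omega

lemma three_mem {Δ : Finset ℕ} {a b c : ℕ} (hab : a ≠ b) (hac : a ≠ c) (hbc : b ≠ c)
    (ha : a ∈ Δ) (hb : b ∈ Δ) (hc : c ∈ Δ) (h : Δ.card ≤ 2) : False := by
  have hsub : ({a, b, c} : Finset ℕ) ⊆ Δ := by
    intro x hx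
    simp only [Finset.mem_insert, Finset.mem_singleton] at hx
    rcases hx with rfl | rfl | rfl <;> assumption
  have h1 := Finset.card_le_card hsub
  rw [Finset.card_insert_of_notMem (by simp [hab, hac]),
      Finset.card_insert_of_notMem (by simp [hbc]), Finset.card_singleton] at h1
  omega

lemma exists_pair (Δ : Finset ℕ) (h : Δ.card ≤ 2) : ∃ u v, OK u v ∧ u ∉ Δ ∧ v ∉ Δ := by
  by_cases h0 : 0 ∈ Δ
  · by_cases h16 : 1 ∈ Δ ∨ 6 ∈ Δ
    · refine ⟨2, 7, Or.inr (Or.inr (Or.inr (Or.inr ⟨rfl, rfl⟩))), fun h2 => ?_, fun h7 => ?_⟩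
      · rcases h16 with h1 | h6
        · exact three_mem (by omega) (by omega) (by omega) h0 h1 h2 h
        · exact three_mem (by omega) (by omega) (by omega) h0 h6 h2 h
      · rcases h16 with h1 | h6
        · exact three_mem (by omega) (by omega) (by omega) h0 h1 h7 h
        · exact three_mem (by omega) (by omega) (by omega) h0 h6 h7 h
    · push_neg at h16
      exact ⟨1, 6, Or.inr (Or.inr (Or.inr (Or.inl ⟨rfl, rfl⟩))), h16.1, h16.2⟩
  · obtain ⟨v, hv, hvn⟩ := exists_v Δ h
    refine ⟨0, v, ?_, h0, hvn⟩
    rcases hv with rfl | rfl | rfl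
    · exact Or.inl ⟨rfl, rfl⟩
    · exact Or.inr (Or.inl ⟨rfl, rfl⟩)
    · exact Or.inr (Or.inr (Or.inl ⟨rfl, rfl⟩))

lemma win0 {u v : ℕ} (Δ : Finset ℕ) (b : Bool) (h : OK u v) :
    OneShotWins Wc 2 0 Δ (thb u v) b :=
  done_b h

lemma win1_struck {Δ : Finset ℕ} {u v : ℕ} (hok : OK u v) (hv : v ∉ Δ) :
    OneShotWins Wc 2 1 Δ (tha u) true := by
  refine Or.inr ⟨⟨2, by rw [mem_S_iff]; right; rfl, by simp [tha_eval]⟩, ?_⟩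
  intro Δ' struck' hm
  rcases hm with ⟨rfl, rfl⟩ | ⟨hfalse, -⟩
  · exact ⟨thb u v, move_b hok hv, win0 _ true hok⟩
  · exact absurd hfalse (by simp)

lemma win1_pass : OneShotWins Wc 2 1 ∅ (tha 0) false := by
  refine Or.inr ⟨⟨2, by rw [mem_S_iff]; right; rfl, by simp [tha_eval]⟩, ?_⟩
  intro Δ' struck' hm
  have hcard : Δ'.card ≤ 2 := by
    rcases hm with ⟨rfl, -⟩ | ⟨-, -, -, -, hc⟩
    · simp
    · simpa using hc
  obtain ⟨v, hv, hvn⟩ := exists_v Δ' hcard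
  have hok : OK 0 v := by
    rcases hv with rfl | rfl | rfl
    · exact Or.inl ⟨rfl, rfl⟩
    · exact Or.inr (Or.inl ⟨rfl, rfl⟩)
    · exact Or.inr (Or.inr (Or.inl ⟨rfl, rfl⟩))
  exact ⟨thb 0 v, move_b hok hvn, win0 Δ' struck' hok⟩

lemma Scard : Wc.S.card = 2 := by decide

lemma oneshot : Wc.OneShotResilient 2 := by
  unfold WAP.OneShotResilient
  rw [Scard]
  refine Or.inr ⟨⟨1, by rw [mem_S_iff]; left; rfl, rfl⟩, ?_⟩
  intro Δ' struck' hm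
  rcases hm with ⟨rfl, rfl⟩ | ⟨-, rfl, -, hsub, hc2⟩
  · exact ⟨tha 0, move_a (Or.inl ⟨rfl, rfl⟩) (by simp), win1_pass⟩
  · have hcard : Δ'.card ≤ 2 := by simpa using hc2
    obtain ⟨u, v, hok, hun, hvn⟩ := exists_pair Δ' hcard
    exact ⟨tha u, move_a hok hun, win1_struck hok hvn⟩

lemma wf : Wc.WellFormed := by
  refine ⟨fun s _ => rfl, fun _ _ _ _ h _ => h, fun _ _ _ _ _ _ h h' => h.trans h', ?_, ?_⟩
  · rintro ⟨a, b⟩ hp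
    rcases hp with ⟨h1, h2⟩ | ⟨h1, h2⟩ <;>
      simp only at h1 h2 <;> subst h1 <;>
      refine ⟨by rw [mem_S_iff]; omega, by rw [mem_U_iff]; omega⟩
  · intro c hc
    rw [mem_C_iff] at hc
    subst hc
    refine ⟨fun x hx => hx, ?_⟩
    intro θ hθ
    have hcases : (θ = pf 0 3 ∨ θ = pf 0 4 ∨ θ = pf 0 5 ∨ θ = pf 1 6 ∨ θ = pf 2 7) := by
      simpa [Th, Set.mem_insert_iff, Set.mem_singleton_iff] using hθ
    rcases hcases with rfl | rfl | rfl | rfl | rfl <;>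
    · constructor
      · intro s
        by_cases h1 : s = 1
        · subst h1; simp [pf]
        · by_cases h2 : s = 2
          · subst h2; simp [pf]
          · simp [pf, h1, h2]
      · intro s u hsu
        rw [mem_U_iff]
        unfold pf at hsu
        split_ifs at hsu <;> simp_all <;> omega

lemma notdec : ¬ Wc.DecrementallyResilient 2 := by
  intro h
  unfold WAP.DecrementallyResilient at h
  rw [Scard] at h
  rcases h with ⟨hfull, -⟩ | ⟨-, h⟩
  · exact hfull 1 (by rw [mem_S_iff]; left; rfl) rfl
  obtain ⟨θ', hmv, hwin⟩ := h {0}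
    ⟨Finset.empty_subset _, by intro x hx; rw [mem_U_iff]; simp at hx; omega, by simp⟩
  obtain ⟨s, u, hsS, hsn, huU, hu0, rfl, hpp, hval⟩ := hmv
  have hu0' : u ≠ 0 := by simpa using hu0
  rw [mem_S_iff] at hsS
  rcases hwin with ⟨hfull, -⟩ | ⟨-, h1⟩
  · rcases hsS with rfl | rfl
    · exact hfull 2 (by rw [mem_S_iff]; right; rfl)
        (by rw [Function.update_of_ne (by omega : (2:ℕ) ≠ 1)])
    · exact hfull 1 (by rw [mem_S_iff]; left; rfl)
        (by rw [Function.update_of_ne (by omega : (1:ℕ) ≠ 2)])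
  · -- choose the killing user k depending on s,u
    rcases hsS with rfl | rfl
    · -- s = 1
      set k : ℕ := if u = 1 then 6 else 7 with hk
      have hk8 : k < 8 := by rw [hk]; split_ifs <;> omega
      obtain ⟨θ'', hmv2, hwin0⟩ := h1 (insert 0 {k})
        ⟨by intro x hx; simp at hx; simp [hx],
         by intro x hx; rw [mem_U_iff]; simp at hx; rcases hx with rfl | rfl <;> omega,
         le_trans (Finset.card_insert_le _ _) (by simp)⟩
      obtain ⟨s', u', hs'S, hs'n, hu'U, hu'Δ, rfl, hpp2, hval2⟩ := hmv2
      rw [mem_S_iff] at hs'S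
      have hs2 : s' = 2 := by
        rcases hs'S with rfl | rfl
        · rw [Function.update_self] at hs'n; exact absurd hs'n (by simp)
        · rfl
      subst hs2
      obtain ⟨hfull2, -, hval''⟩ := hwin0
      have hr : restrictTo (Function.update (Function.update (fun _ => none) 1 (some u)) 2 (some u')) ({1,2} : Finset ℕ) ∈ Th := by
        refine hval''.2 ({1,2}, Th) ((mem_C_iff _).mpr rfl) ?_
        intro x hx
        exact hfull2 x (by rw [mem_S_iff]; simpa using hx)
      have t1 : Function.update (Function.update (fun _ => none : ℕ → Option ℕ) 1 (some u)) 2 (some u') 1 = some u := by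
        rw [Function.update_of_ne (by omega : (1:ℕ) ≠ 2), Function.update_self]
      have t2 : Function.update (Function.update (fun _ => none : ℕ → Option ℕ) 1 (some u)) 2 (some u') 2 = some u' := Function.update_self _ _ _
      simp only [Th, Set.mem_insert_iff, Set.mem_singleton_iff] at hr
      rcases hr with hr | hr | hr | hr | hr <;>
      · have e1 := congrFun hr 1
        have e2 := congrFun hr 2
        simp only [WAP.restrictTo, pf, t1, t2, Finset.mem_insert, Finset.mem_singleton] at e1 e2
        norm_num at e1 e2
        subst e1
        subst e2
        first
        | exact hu0' rfl
        | · revert hu'Δ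
            simp [hk]
    · -- s = 2
      set k : ℕ := if u = 6 then 1 else if u = 7 then 2 else 1 with hk
      have hk8 : k < 8 := by rw [hk]; split_ifs <;> omega
      obtain ⟨θ'', hmv2, hwin0⟩ := h1 (insert 0 {k})
        ⟨by intro x hx; simp at hx; simp [hx],
         by intro x hx; rw [mem_U_iff]; simp at hx; rcases hx with rfl | rfl <;> omega,
         le_trans (Finset.card_insert_le _ _) (by simp)⟩
      obtain ⟨s', u', hs'S, hs'n, hu'U, hu'Δ, rfl, hpp2, hval2⟩ := hmv2
      rw [mem_S_iff] at hs'S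
      have hs1 : s' = 1 := by
        rcases hs'S with rfl | rfl
        · rfl
        · rw [Function.update_self] at hs'n; exact absurd hs'n (by simp)
      subst hs1
      obtain ⟨hfull2, -, hval''⟩ := hwin0
      have hr : restrictTo (Function.update (Function.update (fun _ => none) 2 (some u)) 1 (some u')) ({1,2} : Finset ℕ) ∈ Th := by
        refine hval''.2 ({1,2}, Th) ((mem_C_iff _).mpr rfl) ?_
        intro x hx
        exact hfull2 x (by rw [mem_S_iff]; simpa using hx)
      have t1 : Function.update (Function.update (fun _ => none : ℕ → Option ℕ) 2 (some u)) 1 (some u') 1 = some u' := Function.update_self _ _ _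
      have t2 : Function.update (Function.update (fun _ => none : ℕ → Option ℕ) 2 (some u)) 1 (some u') 2 = some u := by
        rw [Function.update_of_ne (by omega : (2:ℕ) ≠ 1), Function.update_self]
      simp only [Th, Set.mem_insert_iff, Set.mem_singleton_iff] at hr
      rcases hr with hr | hr | hr | hr | hr <;>
      · have e1 := congrFun hr 1
        have e2 := congrFun hr 2
        simp only [WAP.restrictTo, pf, t1, t2, Finset.mem_insert, Finset.mem_singleton] at e1 e2
        norm_num at e1 e2
        subst e1
        subst e2
        first
        | exact hu0' rfl
        | · revert hu'Δ
            simp [hk]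

end CE

/-- There exist a workflow authorization policy `W` and a
budget `t ≥ 0` such that `W` is one-shot resilient for budget `t` but not
decrementally resilient for budget `t`. -/
theorem exists_oneShot_resilient_not_decrementally_resilient :
    ∃ (W : WAP ℕ ℕ) (t : ℕ), W.WellFormed ∧
      W.OneShotResilient t ∧ ¬ W.DecrementallyResilient t := by
  exact ⟨Wc, 2, wf, oneshot, notdec⟩
end

section
/- Let W = (S, ≼, U, A, C) be a workflow authorization policy and let (s, u) be a pair such that the singleton function {(s, u)} is a valid partial plan of W. Then a function θ' : S ∖ {s} → U is a valid plan of project(W, s, u) if and only if the function θ' ∪ {(s, u)} : S → U is a valid plan of W. -/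
namespace WAP

variable {σ υ : Type} [DecidableEq σ] [DecidableEq υ]

/-- The partial function `θ_τ` determined by a sequence `τ ∈ (S × U)*`. -/
def planOf : List (σ × υ) → σ → Option υ
  | [], _ => none
  | (s, u) :: rest, s' => if s' = s then some u else planOf rest s'

/-- A sequence is functional if no step occurs more than once in it. -/
def Functional (τ : List (σ × υ)) : Prop := (τ.map Prod.fst).Nodup

/-- A play: a functional sequence `τ` such that `θ_τ` is a valid partial plan. -/
def IsPlay (W : WAP σ υ) (τ : List (σ × υ)) : Prop :=
  Functional τ ∧ W.IsPartialPlan (planOf τ) ∧ W.Valid (planOf τ)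

/-- A terminus: a play `π` with `dom(θ_π) = S`. -/
def IsTerminus (W : WAP σ υ) (π : List (σ × υ)) : Prop :=
  W.IsPlay π ∧ ∀ s ∈ W.S, planOf π s ≠ none

/-- A strike `(τ, Δ)`: `τ` is a play with `dom(θ_τ) ≠ S` (the trigger),
`Δ ⊆ U` and `|Δ| ≤ t`. -/
def IsStrike (W : WAP σ υ) (t : ℕ) (τ : List (σ × υ)) (Δ : Finset υ) : Prop :=
  W.IsPlay τ ∧ (∃ s ∈ W.S, planOf τ s = none) ∧ Δ ⊆ W.U ∧ Δ.card ≤ t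

/-- The strike `(τ, Δ)` invalidates the terminus `π`: `τ` is a prefix of `π`
and no user from `Δ` is assigned by `π` after the moves in `τ`. -/
def Invalidates (τ : List (σ × υ)) (Δ : Finset υ) (π : List (σ × υ)) : Prop :=
  τ <+: π ∧ ∀ p ∈ π.drop τ.length, p.2 ∉ Δ

/-- The strike `(τ, Δ)` is successful: it invalidates every terminus having
its trigger `τ` as a prefix. -/
def SuccessfulStrike (W : WAP σ υ) (t : ℕ) (τ : List (σ × υ)) (Δ : Finset υ) : Prop :=
  W.IsStrike t τ Δ ∧ ∀ π, W.IsTerminus π → τ <+: π → Invalidates τ Δ π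

/-- The singleton partial function `{(s, u)}`. -/
def single (s : σ) (u : υ) : σ → Option υ :=
  fun s' => if s' = s then some u else none

/-- The projection `project(W, s, u)` of a workflow authorization policy. -/
def project (W : WAP σ υ) (s : σ) (u : υ) : WAP σ υ where
  S := W.S.erase s
  ord := fun a b => W.ord a b ∧ a ∈ W.S.erase s ∧ b ∈ W.S.erase s
  U := W.U
  A := {p | p ∈ W.A ∧ p.1 ∈ W.S.erase s}
  C := {c | c ∈ W.C ∧ s ∉ c.1} ∪
       {c' | ∃ c ∈ W.C, s ∈ c.1 ∧ 1 < c.1.card ∧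
          c' = (c.1.erase s,
                {θ' | ∃ θ ∈ c.2, θ s = some u ∧ θ' = restrictTo θ (c.1.erase s)})}

/-- Iterated projection along a sequence of assignments. -/
def projectSeq (W : WAP σ υ) (τ : List (σ × υ)) : WAP σ υ :=
  τ.foldl (fun W' p => W'.project p.1 p.2) W

end WAP

/-- Suppose the singleton function `{(s, u)}` is a valid
partial plan of `W`.  A function `θ' : S ∖ {s} → U` is a valid plan of
`project(W, s, u)` if and only if `θ' ∪ {(s, u)} : S → U` is a valid plan
of `W`. -/
theorem project_validPlan_iff
    {σ υ : Type} [DecidableEq σ] [DecidableEq υ]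
    (W : WAP σ υ) (hW : W.WellFormed) (s : σ) (u : υ)
    (hpp : W.IsPartialPlan (WAP.single s u)) (hv : W.Valid (WAP.single s u))
    (θ' : σ → Option υ)
    (hdom : ∀ x, θ' x ≠ none ↔ x ∈ W.S.erase s)
    (hran : ∀ x v, θ' x = some v → v ∈ W.U) :
    (W.project s u).IsValidPlan θ' ↔
      W.IsValidPlan (Function.update θ' s (some u)) := by
  have hsu : WAP.single s u s = some u := by simp [WAP.single]
  have hsS : s ∈ W.S := (hpp.1 s u hsu).1
  have huU : u ∈ W.U := (hpp.1 s u hsu).2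
  have hsA : (s, u) ∈ W.A := hv.1 s u hsu
  have hθ's : θ' s = none := by
    by_contra h
    exact (Finset.notMem_erase s W.S) ((hdom s).1 h)
  set θ := Function.update θ' s (some u) with hθdef
  have hθx : ∀ x, x ≠ s → θ x = θ' x := fun x hx => Function.update_of_ne hx _ _
  have hθs : θ s = some u := Function.update_self _ _ _
  have htotal : ∀ x ∈ W.S, θ x ≠ none := by
    intro x hx
    by_cases hxs : x = s
    · subst hxs; simp [hθs]
    · rw [hθx x hxs]; exact (hdom x).2 (Finset.mem_erase.2 ⟨hxs, hx⟩)
  have htot' : ∀ x ∈ W.S.erase s, θ' x ≠ none := fun x hx => (hdom x).2 hx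
  constructor
  · rintro ⟨⟨_, _⟩, hauth', hcons'⟩
    refine ⟨⟨⟨?_, ?_⟩, htotal⟩, ?_, ?_⟩
    · intro x v hxv
      by_cases hxs : x = s
      · subst hxs; rw [hθs] at hxv; cases hxv; exact ⟨hsS, huU⟩
      · rw [hθx x hxs] at hxv
        exact ⟨(Finset.mem_erase.1 ((hdom x).1 (by simp [hxv]))).2, hran x v hxv⟩
    · intro s₁ s₂ h₁ h₂ _ _ _; exact htotal s₂ h₂
    · intro x v hxv
      by_cases hxs : x = s
      · subst hxs; rw [hθs] at hxv; cases hxv; exact hsA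
      · rw [hθx x hxs] at hxv
        exact (hauth' x v hxv).1
    · intro c hc _
      have hcS : c.1 ⊆ W.S := (hW.2.2.2.2 c hc).1
      by_cases hsc : s ∈ c.1
      · by_cases hcard : 1 < c.1.card
        · -- projected constraint
          have hmem : (c.1.erase s,
              {φ' | ∃ φ ∈ c.2, φ s = some u ∧ φ' = WAP.restrictTo φ (c.1.erase s)})
              ∈ (W.project s u).C := Or.inr ⟨c, hc, hsc, hcard, rfl⟩
          have hdomc : ∀ x ∈ c.1.erase s, θ' x ≠ none := by
            intro x hx
            exact htot' x (Finset.mem_erase.2 ⟨(Finset.mem_erase.1 hx).1,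
              hcS (Finset.mem_erase.1 hx).2⟩)
          obtain ⟨φ, hφ, hφs, hφeq⟩ := hcons' _ hmem hdomc
          have hφdom := ((hW.2.2.2.2 c hc).2 φ hφ).1
          have : WAP.restrictTo θ c.1 = φ := by
            funext x
            by_cases hx : x ∈ c.1
            · by_cases hxs : x = s
              · subst hxs
                simp only [WAP.restrictTo, if_pos hx, hθs, hφs]
              · have hxe : x ∈ c.1.erase s := Finset.mem_erase.2 ⟨hxs, hx⟩
                have := congrFun hφeq x
                simp only [WAP.restrictTo, if_pos hxe] at this
                simp only [WAP.restrictTo, if_pos hx, hθx x hxs, this]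
            · simp only [WAP.restrictTo, if_neg hx]
              by_contra h
              exact hx ((hφdom x).1 (Ne.symm h))
          rw [this]; exact hφ
        · -- c.1 = {s}
          have h1 : c.1.card = 1 := by
            have : 0 < c.1.card := Finset.card_pos.2 ⟨s, hsc⟩
            omega
          obtain ⟨a, ha⟩ := Finset.card_eq_one.1 h1
          have has : a = s := by
            rw [ha, Finset.mem_singleton] at hsc; exact hsc.symm
          subst has
          have hsing := hv.2 c hc (by
            intro t ht; rw [ha, Finset.mem_singleton] at ht; subst ht
            simp [WAP.single])
          have : WAP.restrictTo θ c.1 = WAP.restrictTo (WAP.single a u) c.1 := by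
            funext x
            by_cases hx : x ∈ c.1
            · have hxa : x = a := by rw [ha, Finset.mem_singleton] at hx; exact hx
              subst hxa
              simp [WAP.restrictTo, hx, hθs, WAP.single]
            · simp [WAP.restrictTo, hx]
          rw [this]; exact hsing
      · -- s ∉ c.1
        have hmem : c ∈ (W.project s u).C := Or.inl ⟨hc, hsc⟩
        have hdomc : ∀ x ∈ c.1, θ' x ≠ none := by
          intro x hx
          exact htot' x (Finset.mem_erase.2 ⟨fun h => hsc (h ▸ hx), hcS hx⟩)
        have := hcons' c hmem hdomc
        have heq : WAP.restrictTo θ c.1 = WAP.restrictTo θ' c.1 := by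
          funext x
          by_cases hx : x ∈ c.1
          · have hxs : x ≠ s := fun h => hsc (h ▸ hx)
            simp only [WAP.restrictTo, if_pos hx, hθx x hxs]
          · simp [WAP.restrictTo, hx]
        rw [heq]; exact this
  · rintro ⟨⟨_, _⟩, hauth, hcons⟩
    refine ⟨⟨⟨?_, ?_⟩, htot'⟩, ?_, ?_⟩
    · intro x v hxv
      exact ⟨(hdom x).1 (by simp [hxv]), hran x v hxv⟩
    · intro s₁ s₂ h₁ h₂ _ _ _; exact htot' s₂ h₂
    · intro x v hxv
      have hxe := (hdom x).1 (by simp [hxv])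
      have hxs : x ≠ s := (Finset.mem_erase.1 hxe).1
      exact ⟨hauth x v (by rw [hθx x hxs]; exact hxv), hxe⟩
    · rintro c' (⟨hc, hsc⟩ | ⟨c, hc, hsc, hcard, rfl⟩) _
      · have hcS : c'.1 ⊆ W.S := (hW.2.2.2.2 c' hc).1
        have := hcons c' hc (fun t ht => htotal t (hcS ht))
        have heq : WAP.restrictTo θ' c'.1 = WAP.restrictTo θ c'.1 := by
          funext x
          by_cases hx : x ∈ c'.1
          · have hxs : x ≠ s := fun h => hsc (h ▸ hx)
            simp only [WAP.restrictTo, if_pos hx, hθx x hxs]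
          · simp [WAP.restrictTo, hx]
        rw [heq]; exact this
      · have hcS : c.1 ⊆ W.S := (hW.2.2.2.2 c hc).1
        have hφ := hcons c hc (fun t ht => htotal t (hcS ht))
        refine ⟨WAP.restrictTo θ c.1, hφ, by
          simp [WAP.restrictTo, hsc, hθs], ?_⟩
        funext x
        by_cases hx : x ∈ c.1.erase s
        · obtain ⟨hxs, hxc⟩ := Finset.mem_erase.1 hx
          simp only [WAP.restrictTo, if_pos hx, if_pos hxc, hθx x hxs]
        · simp [WAP.restrictTo, hx]
end

section
/- Let W = (S, ≼, U, A, C) be a workflow authorization policy with |S| = N and t ≥ 0 an integer budget. Then W is one-shot resilient for budget t if and only if there exists a functional sequence π = (s₁,u₁)(s₂,u₂)⋯(s_N,u_N) such that (a) θ_π is a valid plan, (b) every prefix of π has a causally closed domain (hence every prefix is a play), and (c) for every 0 ≤ i ≤ N−1, the workflow authorization policy W_i obtained from W by successively applying the projection operation with (s₁,u₁), …, (s_i,u_i) is statically resilient for budget t (so in particular W₀ = W is statically resilient for budget t). -/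
namespace WAP

variable {σ υ : Type} [DecidableEq σ] [DecidableEq υ]
set_option linter.unusedSectionVars false

theorem planOf_append (τ₁ τ₂ : List (σ × υ)) (s : σ) :
    planOf (τ₁ ++ τ₂) s = (planOf τ₁ s <|> planOf τ₂ s) := by
  induction τ₁ with
  | nil => simp [planOf]
  | cons p rest ih =>
      obtain ⟨a, b⟩ := p
      simp only [List.cons_append, planOf]
      by_cases h : s = a <;> simp [h, ih]

theorem planOf_ne_none_iff (τ : List (σ × υ)) (s : σ) :
    planOf τ s ≠ none ↔ s ∈ τ.map Prod.fst := by
  induction τ with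
  | nil => simp [planOf]
  | cons p rest ih =>
      obtain ⟨a, b⟩ := p
      simp only [planOf, List.map_cons, List.mem_cons]
      by_cases h : s = a <;> simp [h, ih]

theorem planOf_eq_none (τ : List (σ × υ)) (s : σ) (h : s ∉ τ.map Prod.fst) :
    planOf τ s = none := by
  by_contra hc; exact h ((planOf_ne_none_iff τ s).1 hc)

theorem planOf_mem (τ : List (σ × υ)) (hτ : Functional τ) (p : σ × υ) (hp : p ∈ τ) :
    planOf τ p.1 = some p.2 := by
  induction τ with
  | nil => cases hp
  | cons q rest ih =>
      obtain ⟨a, b⟩ := q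
      rcases List.mem_cons.1 hp with h | h
      · subst h; simp [planOf]
      · have hne : p.1 ≠ a := by
          intro he
          have : a ∈ rest.map Prod.fst := he ▸ List.mem_map_of_mem (f := Prod.fst) h
          exact (List.nodup_cons.1 hτ).1 this
        simp only [planOf, if_neg hne]
        exact ih (List.nodup_cons.1 hτ).2 h

theorem projectSeq_cons (W : WAP σ υ) (p : σ × υ) (τ : List (σ × υ)) :
    projectSeq W (p :: τ) = projectSeq (project W p.1 p.2) τ := rfl

theorem projectSeq_U (W : WAP σ υ) (τ : List (σ × υ)) :
    (projectSeq W τ).U = W.U := by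
  induction τ generalizing W with
  | nil => rfl
  | cons p rest ih => exact ih (project W p.1 p.2)

theorem projectSeq_S_subset (W : WAP σ υ) (τ : List (σ × υ)) :
    (projectSeq W τ).S ⊆ W.S := by
  induction τ generalizing W with
  | nil => exact fun _ h => h
  | cons p rest ih =>
      exact fun x hx => Finset.erase_subset _ _ (ih (project W p.1 p.2) hx)

theorem wf_project (W : WAP σ υ) (hW : W.WellFormed) (s : σ) (u : υ) :
    (project W s u).WellFormed := by
  obtain ⟨hrefl, hanti, htrans, hA, hC⟩ := hW
  refine ⟨?_, ?_, ?_, ?_, ?_⟩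
  · intro a ha
    exact ⟨hrefl a (Finset.mem_of_mem_erase ha), ha, ha⟩
  · intro a ha b hb h1 h2
    exact hanti a (Finset.mem_of_mem_erase ha) b (Finset.mem_of_mem_erase hb) h1.1 h2.1
  · intro a ha b hb c hc h1 h2
    exact ⟨htrans a (Finset.mem_of_mem_erase ha) b (Finset.mem_of_mem_erase hb)
      c (Finset.mem_of_mem_erase hc) h1.1 h2.1, ha, hc⟩
  · intro p hp
    exact ⟨hp.2, (hA p hp.1).2⟩
  · intro c hc
    rcases hc with ⟨hc, hns⟩ | ⟨c₀, hc₀, hs, hcard, hc⟩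
    · refine ⟨fun x hx => Finset.mem_erase.2 ⟨fun he => hns (he ▸ hx), (hC c hc).1 hx⟩, ?_⟩
      exact (hC c hc).2
    · subst hc
      refine ⟨fun x hx => Finset.mem_erase.2
        ⟨(Finset.mem_erase.1 hx).1, (hC c₀ hc₀).1 (Finset.mem_of_mem_erase hx)⟩, ?_⟩
      rintro θ' ⟨θ, hθ, hθs, rfl⟩
      obtain ⟨hdom, hval⟩ := (hC c₀ hc₀).2 θ hθ
      constructor
      · intro x
        simp only [restrictTo]
        by_cases hx : x ∈ c₀.1.erase s
        · simp only [if_pos hx]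
          exact ⟨fun _ => hx, fun _ => (hdom x).2 (Finset.mem_of_mem_erase hx)⟩
        · simp [hx]
      · intro x v hv
        simp only [restrictTo] at hv
        by_cases hx : x ∈ c₀.1.erase s
        · exact hval x v (by simpa [hx] using hv)
        · simp [hx] at hv

theorem wf_projectSeq (W : WAP σ υ) (hW : W.WellFormed) (τ : List (σ × υ)) :
    (projectSeq W τ).WellFormed := by
  induction τ generalizing W with
  | nil => exact hW
  | cons p rest ih => exact ih _ (wf_project W hW p.1 p.2)

end WAP
namespace WAP

variable {σ υ : Type} [DecidableEq σ] [DecidableEq υ]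
set_option linter.unusedSectionVars false

/-- Restriction of a valid plan to a causally closed set is a valid partial plan. -/
theorem restrict_valid (W : WAP σ υ) (hW : W.WellFormed) (θs : σ → Option υ)
    (hθs : W.IsValidPlan θs) (T : Finset σ) (θ : σ → Option υ)
    (hres : θ = restrictTo θs T)
    (hclosed : ∀ s₁ s₂, s₁ ∈ W.S → s₂ ∈ W.S → θ s₁ ≠ none → W.ord s₂ s₁ → s₂ ≠ s₁ →
      θ s₂ ≠ none) :
    W.IsPartialPlan θ ∧ W.Valid θ := by
  obtain ⟨⟨⟨hvals, _⟩, htot⟩, hauth, hcons⟩ := hθs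
  have hsub : ∀ s u, θ s = some u → θs s = some u := by
    intro s u h
    rw [hres] at h
    simp only [restrictTo] at h
    by_cases hs : s ∈ T
    · simpa [hs] using h
    · simp [hs] at h
  refine ⟨⟨fun s u h => hvals s u (hsub s u h), hclosed⟩, fun s u h => hauth s u (hsub s u h), ?_⟩
  intro c hc hdom
  have hT : c.1 ⊆ W.S := (hW.2.2.2.2 c hc).1
  have : restrictTo θ c.1 = restrictTo θs c.1 := by
    funext x
    simp only [restrictTo]
    by_cases hx : x ∈ c.1
    · simp only [if_pos hx]
      obtain ⟨u, hu⟩ := Option.ne_none_iff_exists'.1 (hdom x hx)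
      rw [hu, hsub x u hu]
    · simp [hx]
  rw [this]
  exact hcons c hc fun x hx => htot x (hT hx)

/-- Removing one assignment of a valid plan yields a valid plan of the projection. -/
theorem project_validPlan (W : WAP σ υ) (hW : W.WellFormed) (θ : σ → Option υ)
    (hθ : W.IsValidPlan θ) (s : σ) (u : υ) (hs : θ s = some u) :
    (project W s u).IsValidPlan (fun x => if x = s then none else θ x) := by
  obtain ⟨⟨⟨hvals, _⟩, htot⟩, hauth, hcons⟩ := hθ
  have hsS : s ∈ W.S := (hvals s u hs).1
  refine ⟨⟨⟨?_, ?_⟩, ?_⟩, ?_, ?_⟩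
  · intro x v h
    by_cases hx : x = s
    · simp [hx] at h
    · simp only [if_neg hx] at h
      exact ⟨Finset.mem_erase.2 ⟨hx, (hvals x v h).1⟩, (hvals x v h).2⟩
  · intro s₁ s₂ h₁ h₂ hne hord hneq
    have : s₂ ≠ s := (Finset.mem_erase.1 h₂).1
    simp only [if_neg this]
    exact htot s₂ (Finset.mem_of_mem_erase h₂)
  · intro x hx
    have hxs : x ≠ s := (Finset.mem_erase.1 hx).1
    simp only [if_neg hxs]
    exact htot x (Finset.mem_of_mem_erase hx)
  · intro x v h
    by_cases hx : x = s
    · simp [hx] at h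
    · simp only [if_neg hx] at h
      exact ⟨hauth x v h, Finset.mem_erase.2 ⟨hx, (hvals x v h).1⟩⟩
  · rintro c (⟨hc, hns⟩ | ⟨c₀, hc₀, hsc, hcard, hceq⟩) hdom
    · have : restrictTo (fun x => if x = s then none else θ x) c.1 = restrictTo θ c.1 := by
        funext x
        simp only [restrictTo]
        by_cases hx : x ∈ c.1
        · have : x ≠ s := fun he => hns (he ▸ hx)
          simp [hx, this]
        · simp [hx]
      rw [this]
      exact hcons c hc fun x hx => htot x ((hW.2.2.2.2 c hc).1 hx)
    · subst hceq
      refine ⟨restrictTo θ c₀.1, hcons c₀ hc₀ fun x hx => htot x ((hW.2.2.2.2 c₀ hc₀).1 hx), ?_, ?_⟩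
      · simp only [restrictTo, if_pos hsc]; exact hs
      · funext x
        simp only [restrictTo]
        by_cases hx : x ∈ c₀.1.erase s
        · have hxs : x ≠ s := (Finset.mem_erase.1 hx).1
          simp [hx, hxs, Finset.mem_of_mem_erase hx]
        · simp [hx]

/-- Iterated version of `project_validPlan`. -/
theorem projectSeq_validPlan (τ : List (σ × υ)) : ∀ (W : WAP σ υ), W.WellFormed →
    Functional τ → ∀ (θ : σ → Option υ), W.IsValidPlan θ →
    (∀ p ∈ τ, θ p.1 = some p.2) →
    (projectSeq W τ).IsValidPlan (fun x => if x ∈ τ.map Prod.fst then none else θ x) := by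
  induction τ with
  | nil =>
      intro W hW _ θ hθ _
      simpa [projectSeq] using hθ
  | cons p rest ih =>
      intro W hW hfun θ hθ hvals
      obtain ⟨a, b⟩ := p
      have hab : θ a = some b := hvals (a, b) List.mem_cons_self
      have h1 := project_validPlan W hW θ hθ a b hab
      have h2 := ih (project W a b) (wf_project W hW a b) (List.nodup_cons.1 hfun).2
        (fun x => if x = a then none else θ x) h1 ?_
      · rw [projectSeq_cons]
        have heq : (fun x => if x ∈ List.map Prod.fst ((a, b) :: rest) then none else θ x) =
            (fun x : σ => if x ∈ List.map Prod.fst rest then none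
              else (fun x => if x = a then none else θ x) x) := by
          funext x
          simp only [List.map_cons, List.mem_cons]
          by_cases hx : x = a
          · have ha : a ∉ rest.map Prod.fst := (List.nodup_cons.1 hfun).1
            simp [hx, ha]
          · by_cases hx2 : x ∈ rest.map Prod.fst <;> simp [hx, hx2]
        rw [heq]
        exact h2
      · intro q hq
        have : q.1 ≠ a := by
          intro he
          have hm := List.mem_map_of_mem (f := Prod.fst) hq
          rw [he] at hm
          exact (List.nodup_cons.1 hfun).1 hm
        simp only [if_neg this]
        exact hvals q (List.mem_cons_of_mem _ hq)

end WAP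
namespace WAP

variable {σ υ : Type} [DecidableEq σ] [DecidableEq υ]
set_option linter.unusedSectionVars false

/-- Extending a valid plan of the projection by the projected assignment
yields a valid plan of the original policy. -/
theorem unproject_validPlan (W : WAP σ υ) (hW : W.WellFormed) (s : σ) (u : υ)
    (hsS : s ∈ W.S) (huU : u ∈ W.U) (hsA : (s, u) ∈ W.A)
    (hsingle : ∀ c ∈ W.C, c.1 = {s} → single s u ∈ c.2)
    (θ' : σ → Option υ) (hθ' : (project W s u).IsValidPlan θ') (hθ's : θ' s = none) :
    W.IsValidPlan (Function.update θ' s (some u)) := by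
  obtain ⟨⟨⟨hvals, _⟩, htot⟩, hauth, hcons⟩ := hθ'
  set θ := Function.update θ' s (some u) with hθdef
  have hθat : ∀ x, θ x = if x = s then some u else θ' x := by
    intro x
    by_cases hx : x = s <;> simp [hθdef, Function.update, hx]
  have htotS : ∀ x ∈ W.S, θ x ≠ none := by
    intro x hx
    rw [hθat]
    by_cases hxs : x = s
    · simp [hxs]
    · simp only [if_neg hxs]
      exact htot x (Finset.mem_erase.2 ⟨hxs, hx⟩)
  refine ⟨⟨⟨?_, fun s₁ s₂ h₁ h₂ _ _ _ => htotS s₂ h₂⟩, htotS⟩, ?_, ?_⟩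
  · intro x v h
    rw [hθat] at h
    by_cases hx : x = s
    · simp only [if_pos hx] at h
      exact ⟨hx ▸ hsS, (Option.some.injEq _ _ ▸ h : u = v) ▸ huU⟩
    · simp only [if_neg hx] at h
      exact ⟨Finset.mem_of_mem_erase (hvals x v h).1, (projectSeq_U W [] ▸ (hvals x v h).2)⟩
  · intro x v h
    rw [hθat] at h
    by_cases hx : x = s
    · simp only [if_pos hx, Option.some.injEq] at h
      rw [hx, ← h]; exact hsA
    · simp only [if_neg hx] at h
      exact (hauth x v h).1
  · intro c hc hdom
    by_cases hsc : s ∈ c.1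
    · rcases lt_or_ge 1 c.1.card with hcard | hcard
      · -- constraint with more than one step
        have hc' : (c.1.erase s,
            {θ'' | ∃ θ₀ ∈ c.2, θ₀ s = some u ∧ θ'' = restrictTo θ₀ (c.1.erase s)})
            ∈ (project W s u).C := Or.inr ⟨c, hc, hsc, hcard, rfl⟩
        have hdom' : ∀ x ∈ c.1.erase s, θ' x ≠ none := by
          intro x hx
          exact htot x (Finset.mem_erase.2 ⟨(Finset.mem_erase.1 hx).1,
            (hW.2.2.2.2 c hc).1 (Finset.mem_of_mem_erase hx)⟩)
        obtain ⟨θ₀, hθ₀, hθ₀s, heq⟩ := hcons _ hc' hdom'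
        have hfin : restrictTo θ c.1 = θ₀ := by
          funext x
          by_cases hx : x ∈ c.1
          · by_cases hxs : x = s
            · subst hxs
              simp only [restrictTo, if_pos hsc, hθat, if_pos rfl]
              exact hθ₀s.symm
            · have hxe : x ∈ c.1.erase s := Finset.mem_erase.2 ⟨hxs, hx⟩
              have := congrFun heq x
              simp only [restrictTo, if_pos hxe] at this
              simp only [restrictTo, if_pos hx, hθat, if_neg hxs]
              exact this
          · have hdomθ₀ := ((hW.2.2.2.2 c hc).2 θ₀ hθ₀).1 x
            have : θ₀ x = none := by
              by_contra hcon
              exact hx (hdomθ₀.1 hcon)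
            simp [restrictTo, hx, this]
        rw [hfin]; exact hθ₀
      · -- singleton constraint {s}
        have h1 : c.1.card = 1 :=
          le_antisymm hcard (Finset.card_pos.2 ⟨s, hsc⟩)
        obtain ⟨a, ha⟩ := Finset.card_eq_one.1 h1
        have has : a = s := by
          have := hsc; rw [ha, Finset.mem_singleton] at this; exact this.symm
        have hceq : c.1 = {s} := has ▸ ha
        have : restrictTo θ c.1 = single s u := by
          funext x
          simp only [restrictTo, single, hceq, Finset.mem_singleton, hθat]
          by_cases hx : x = s <;> simp [hx]
        rw [this]
        exact hsingle c hc hceq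
    · -- constraint not mentioning s
      have hc' : c ∈ (project W s u).C := Or.inl ⟨hc, hsc⟩
      have hdom' : ∀ x ∈ c.1, θ' x ≠ none := by
        intro x hx
        exact htot x (Finset.mem_erase.2 ⟨fun he => hsc (he ▸ hx), (hW.2.2.2.2 c hc).1 hx⟩)
      have heq : restrictTo θ c.1 = restrictTo θ' c.1 := by
        funext x
        by_cases hx : x ∈ c.1
        · have hxs : x ≠ s := fun he => hsc (he ▸ hx)
          simp [restrictTo, hx, hθat, hxs]
        · simp [restrictTo, hx]
      rw [heq]
      exact hcons c hc' hdom'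

end WAP
namespace WAP

variable {σ υ : Type} [DecidableEq σ] [DecidableEq υ]
set_option linter.unusedSectionVars false

/-- Combining a valid play prefix with a valid plan of the corresponding
iterated projection yields a valid plan of the original policy. -/
theorem combine_validPlan (τ : List (σ × υ)) : ∀ (W : WAP σ υ), W.WellFormed →
    Functional τ → ∀ θπ, W.IsValidPlan θπ → (∀ p ∈ τ, θπ p.1 = some p.2) →
    ∀ (θ'' : σ → Option υ) (Δ : Finset υ),
      (projectSeq W τ).IsValidPlan θ'' → Avoids θ'' Δ →
    W.IsValidPlan (fun x => (planOf τ x <|> θ'' x)) ∧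
    (∀ x v, planOf τ x = none → (planOf τ x <|> θ'' x) = some v → v ∉ Δ) := by
  induction τ with
  | nil =>
      intro W hW _ θπ hθπ _ θ'' Δ hθ'' hav
      constructor
      · simpa [planOf, projectSeq] using hθ''
      · intro x v _ hv
        simp only [planOf, Option.orElse_none] at hv
        exact hav x v hv
  | cons p rest ih =>
      intro W hW hfun θπ hθπ hvals θ'' Δ hθ'' hav
      obtain ⟨a, b⟩ := p
      have hab : θπ a = some b := hvals (a, b) List.mem_cons_self
      have haS : a ∈ W.S := ((hθπ.1.1.1) a b hab).1
      have hbU : b ∈ W.U := ((hθπ.1.1.1) a b hab).2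
      have hbA : (a, b) ∈ W.A := hθπ.2.1 a b hab
      have hsingle : ∀ c ∈ W.C, c.1 = {a} → single a b ∈ c.2 := by
        intro c hc hceq
        have hres := hθπ.2.2 c hc (fun x hx => hθπ.1.2 x ((hW.2.2.2.2 c hc).1 hx))
        have : restrictTo θπ c.1 = single a b := by
          funext x
          simp only [restrictTo, single, hceq, Finset.mem_singleton]
          by_cases hx : x = a <;> simp [hx, hab]
        rwa [this] at hres
      have hθπ₁ := project_validPlan W hW θπ hθπ a b hab
      have hvals₁ : ∀ q ∈ rest, (fun x => if x = a then none else θπ x) q.1 = some q.2 := by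
        intro q hq
        have hne : q.1 ≠ a := by
          intro he
          have hm := List.mem_map_of_mem (f := Prod.fst) hq
          rw [he] at hm
          exact (List.nodup_cons.1 hfun).1 hm
        simp only [if_neg hne]
        exact hvals q (List.mem_cons_of_mem _ hq)
      have hproj : (projectSeq (project W a b) rest).IsValidPlan θ'' := by
        exact hθ''
      obtain ⟨hcomb, havoid⟩ := ih (project W a b) (wf_project W hW a b)
        (List.nodup_cons.1 hfun).2 _ hθπ₁ hvals₁ θ'' Δ hproj hav
      have hθc_a : (fun x => (planOf rest x <|> θ'' x)) a = none := by
        have h1 : planOf rest a = none :=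
          planOf_eq_none rest a (List.nodup_cons.1 hfun).1
        have h2 : θ'' a = none := by
          by_contra hc
          obtain ⟨v, hv⟩ := Option.ne_none_iff_exists'.1 hc
          have := (hθ''.1.1.1 a v hv).1
          rw [projectSeq_cons] at this
          have := projectSeq_S_subset (project W a b) rest this
          exact Finset.notMem_erase a W.S this
        simp [h1, h2]
      have hfinal := unproject_validPlan W hW a b haS hbU hbA hsingle _ hcomb hθc_a
      have heq : Function.update (fun x => (planOf rest x <|> θ'' x)) a (some b) =
          (fun x => (planOf ((a, b) :: rest) x <|> θ'' x)) := by
        funext x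
        by_cases hx : x = a
        · simp [hx, Function.update, planOf]
        · simp [Function.update, hx, planOf]
      rw [heq] at hfinal
      refine ⟨hfinal, ?_⟩
      intro x v hnone hv
      have hxa : x ≠ a := by
        intro he
        rw [he] at hnone
        simp [planOf] at hnone
      have hrest : planOf rest x = none := by
        simpa [planOf, hxa] using hnone
      apply havoid x v hrest
      simpa [planOf, hxa] using hv

end WAP
namespace WAP

variable {σ υ : Type} [DecidableEq σ] [DecidableEq υ]
set_option linter.unusedSectionVars false

theorem exists_minimal (W : WAP σ υ) (hW : W.WellFormed) :
    ∀ (n : ℕ) (R : Finset σ), R.card ≤ n → R ⊆ W.S → R.Nonempty →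
    ∃ s ∈ R, ∀ s₂ ∈ R, W.ord s₂ s → s₂ = s := by
  intro n
  induction n with
  | zero =>
      intro R hcard _ hne
      obtain ⟨a, ha⟩ := hne
      have := Finset.card_pos.2 ⟨a, ha⟩
      omega
  | succ n ih =>
      intro R hcard hRS hne
      classical
      obtain ⟨a, ha⟩ := hne
      by_cases hmin : ∀ s₂ ∈ R, W.ord s₂ a → s₂ = a
      · exact ⟨a, ha, hmin⟩
      · push_neg at hmin
        obtain ⟨b, hb, hba, hbne⟩ := hmin
        set R' := R.filter (fun x => W.ord x a ∧ x ≠ a) with hR'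
        have hbR' : b ∈ R' := Finset.mem_filter.2 ⟨hb, hba, hbne⟩
        have haR' : a ∉ R' := fun h => (Finset.mem_filter.1 h).2.2 rfl
        have hsub : R' ⊆ R := Finset.filter_subset _ _
        have hlt : R'.card < R.card := Finset.card_lt_card ⟨hsub, fun h => haR' (h ha)⟩
        obtain ⟨m, hmR', hmmin⟩ := ih R' (by omega) (hsub.trans hRS) ⟨b, hbR'⟩
        have hmR : m ∈ R := hsub hmR'
        have hma : W.ord m a := (Finset.mem_filter.1 hmR').2.1
        have hmnea : m ≠ a := (Finset.mem_filter.1 hmR').2.2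
        refine ⟨m, hmR, ?_⟩
        intro s₂ hs₂ hord
        have hs₂S : s₂ ∈ W.S := hRS hs₂
        have hmS : m ∈ W.S := hRS hmR
        have haS : a ∈ W.S := hRS ha
        have hs₂a : W.ord s₂ a := hW.2.2.1 s₂ hs₂S m hmS a haS hord hma
        have hs₂ne : s₂ ≠ a := by
          intro he
          subst he
          exact hmnea (hW.2.1 m hmS s₂ hs₂S hma hord)
        exact hmmin s₂ (Finset.mem_filter.2 ⟨hs₂, hs₂a, hs₂ne⟩) hord

theorem finish_wins (W : WAP σ υ) (hW : W.WellFormed) (t : ℕ) :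
    ∀ (n : ℕ) (T : Finset σ) (θs θ : σ → Option υ) (Δ : Finset υ),
    W.IsValidPlan θs → θ = restrictTo θs T →
    (∀ s₁ s₂, s₁ ∈ W.S → s₂ ∈ W.S → θ s₁ ≠ none → W.ord s₂ s₁ → s₂ ≠ s₁ → θ s₂ ≠ none) →
    (∀ x v, θ x = none → θs x = some v → v ∉ Δ) →
    (W.S.filter (fun s => θ s = none)).card ≤ n →
    OneShotWins W t n Δ θ true := by
  intro n
  induction n with
  | zero =>
      intro T θs θ Δ hθs hres hclosed hΔ hcard
      have hall : ∀ s ∈ W.S, θ s ≠ none := by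
        intro s hs hcon
        have : s ∈ W.S.filter (fun s => θ s = none) := Finset.mem_filter.2 ⟨hs, hcon⟩
        have := Finset.card_pos.2 ⟨s, this⟩
        omega
      obtain ⟨hpp, hval⟩ := restrict_valid W hW θs hθs T θ hres hclosed
      exact ⟨hall, hpp, hval⟩
  | succ n ih =>
      intro T θs θ Δ hθs hres hclosed hΔ hcard
      by_cases hall : ∀ s ∈ W.S, θ s ≠ none
      · obtain ⟨hpp, hval⟩ := restrict_valid W hW θs hθs T θ hres hclosed
        exact Or.inl ⟨hall, hpp, hval⟩
      · push_neg at hall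
        obtain ⟨s₀, hs₀S, hs₀⟩ := hall
        refine Or.inr ⟨⟨s₀, hs₀S, hs₀⟩, ?_⟩
        rintro Δ' struck' (⟨heq, rfl⟩ | ⟨h, _⟩)
        swap
        · exact absurd h (by simp)
        rw [heq]
        set R := W.S.filter (fun s => θ s = none) with hRdef
        have hRne : R.Nonempty := ⟨s₀, Finset.mem_filter.2 ⟨hs₀S, hs₀⟩⟩
        obtain ⟨s, hsR, hsmin⟩ := exists_minimal W hW R.card R le_rfl
          (Finset.filter_subset _ _) hRne
        have hsS : s ∈ W.S := (Finset.mem_filter.1 hsR).1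
        have hsnone : θ s = none := (Finset.mem_filter.1 hsR).2
        obtain ⟨u, hu⟩ := Option.ne_none_iff_exists'.1 (hθs.1.2 s hsS)
        have huU : u ∈ W.U := (hθs.1.1.1 s u hu).2
        have huΔ : u ∉ Δ := hΔ s u hsnone hu
        set θ' := Function.update θ s (some u) with hθ'def
        have hθ'at : ∀ x, θ' x = if x = s then some u else θ x := by
          intro x
          by_cases hx : x = s <;> simp [hθ'def, Function.update, hx]
        have hres' : θ' = restrictTo θs (insert s T) := by
          funext x
          rw [hθ'at]
          by_cases hx : x = s
          · simp [restrictTo, hx, hu]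
          · have : x ∈ insert s T ↔ x ∈ T := by simp [hx]
            simp only [restrictTo, if_neg hx, this]
            rw [hres]
            rfl
        have hclosed' : ∀ s₁ s₂, s₁ ∈ W.S → s₂ ∈ W.S → θ' s₁ ≠ none → W.ord s₂ s₁ →
            s₂ ≠ s₁ → θ' s₂ ≠ none := by
          intro s₁ s₂ h₁ h₂ hne hord hneq
          rw [hθ'at]
          by_cases hx2 : s₂ = s
          · simp [hx2]
          · simp only [if_neg hx2]
            by_cases hx1 : s₁ = s
            · subst hx1
              by_contra hcon
              have : s₂ ∈ R := Finset.mem_filter.2 ⟨h₂, by simpa using hcon⟩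
              exact hx2 (hsmin s₂ this hord)
            · have : θ s₁ ≠ none := by
                rw [hθ'at, if_neg hx1] at hne
                exact hne
              exact hclosed s₁ s₂ h₁ h₂ this hord hneq
        have hΔ' : ∀ x v, θ' x = none → θs x = some v → v ∉ Δ := by
          intro x v hx hv
          rw [hθ'at] at hx
          by_cases hxs : x = s
          · simp [hxs] at hx
          · exact hΔ x v (by simpa [hxs] using hx) hv
        have hcard' : (W.S.filter (fun x => θ' x = none)).card ≤ n := by
          have : W.S.filter (fun x => θ' x = none) = R.erase s := by
            ext x
            simp only [Finset.mem_filter, Finset.mem_erase, hRdef]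
            rw [hθ'at]
            by_cases hx : x = s <;> simp [hx]
          rw [this, Finset.card_erase_of_mem hsR]
          omega
        obtain ⟨hpp', hval'⟩ := restrict_valid W hW θs hθs (insert s T) θ' hres' hclosed'
        exact ⟨θ', ⟨s, u, hsS, hsnone, huU, huΔ, rfl, hpp', hval'⟩,
          ih (insert s T) θs θ' Δ hθs hres' hclosed' hΔ' hcard'⟩

theorem extract_plan (W : WAP σ υ) (t : ℕ) :
    ∀ (n : ℕ) (Δ : Finset υ) (θ : σ → Option υ), OneShotWins W t n Δ θ true →
    ∃ θs, W.IsValidPlan θs ∧ (∀ x, θ x ≠ none → θs x = θ x) ∧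
      (∀ x v, θ x = none → θs x = some v → v ∉ Δ) := by
  intro n
  induction n with
  | zero =>
      intro Δ θ hw
      obtain ⟨htot, hpp, hval⟩ := hw
      exact ⟨θ, ⟨⟨hpp, htot⟩, hval⟩, fun x _ => rfl, fun x v h1 h2 => by rw [h1] at h2; cases h2⟩
  | succ n ih =>
      intro Δ θ hw
      rcases hw with ⟨htot, hpp, hval⟩ | ⟨_, h⟩
      · exact ⟨θ, ⟨⟨hpp, htot⟩, hval⟩, fun x _ => rfl, fun x v h1 h2 => by rw [h1] at h2; cases h2⟩
      · obtain ⟨θ', ⟨s, u, hsS, hsnone, huU, huΔ, hupd, _, _⟩, hwins⟩ :=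
          h Δ true (Or.inl ⟨rfl, rfl⟩)
        obtain ⟨θs, hθs, hext, havoid⟩ := ih Δ θ' hwins
        have hθ'at : ∀ x, θ' x = if x = s then some u else θ x := by
          intro x
          by_cases hx : x = s <;> simp [hupd, Function.update, hx]
        refine ⟨θs, hθs, ?_, ?_⟩
        · intro x hx
          have hxs : x ≠ s := fun he => hx (he ▸ hsnone)
          have : θ' x = θ x := by rw [hθ'at, if_neg hxs]
          rw [← this]
          exact hext x (this ▸ hx)
        · intro x v h1 h2
          by_cases hxs : x = s
          · subst hxs
            have : θ' x = some u := by rw [hθ'at, if_pos rfl]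
            have := hext x (by rw [this]; simp)
            rw [h2, hθ'at, if_pos rfl] at this
            cases this
            exact huΔ
          · exact havoid x v (by rw [hθ'at, if_neg hxs]; exact h1) h2

end WAP
namespace WAP

variable {σ υ : Type} [DecidableEq σ] [DecidableEq υ]
set_option linter.unusedSectionVars false

theorem planOf_snoc (τ : List (σ × υ)) (p : σ × υ) (h : planOf τ p.1 = none) :
    planOf (τ ++ [p]) = Function.update (planOf τ) p.1 (some p.2) := by
  funext x
  rw [planOf_append]
  by_cases hx : x = p.1
  · subst hx
    simp [h, planOf, Function.update]
  · simp [planOf, hx, Function.update]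

theorem emptyPlan_partial (W : WAP σ υ) : W.IsPartialPlan (planOf ([] : List (σ × υ))) := by
  constructor
  · intro s u h
    simp [planOf] at h
  · intro s₁ s₂ _ _ h _ _
    simp [planOf] at h

/-- Forward direction main induction. -/
theorem forward_main (W : WAP σ υ) (hW : W.WellFormed) (t : ℕ) :
    ∀ (n : ℕ) (τ : List (σ × υ)), Functional τ → (∀ p ∈ τ, p.1 ∈ W.S) →
    τ.length + n = W.S.card → W.IsPartialPlan (planOf τ) →
    OneShotWins W t n ∅ (planOf τ) false →
    ∃ ρ : List (σ × υ), ρ.length = n ∧ Functional (τ ++ ρ) ∧ (∀ p ∈ ρ, p.1 ∈ W.S) ∧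
      W.IsValidPlan (planOf (τ ++ ρ)) ∧
      (∀ j ≤ n, W.IsPartialPlan (planOf (τ ++ ρ.take j))) ∧
      (∀ j < n, (W.projectSeq (τ ++ ρ.take j)).StaticallyResilient t) := by
  intro n
  induction n with
  | zero =>
      intro τ hfun hmem hlen hpp hw
      obtain ⟨htot, hpp', hval⟩ := hw
      refine ⟨[], rfl, by simpa using hfun, by simp, ?_, ?_, by omega⟩
      · rw [List.append_nil]
        exact ⟨⟨hpp', htot⟩, hval⟩
      · intro j _
        simpa using hpp'
  | succ n ih =>
      intro τ hfun hmem hlen hpp hw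
      rcases hw with ⟨htot, _, _⟩ | ⟨_, h⟩
      · -- impossible: too few steps assigned
        exfalso
        have hSsub : W.S ⊆ (τ.map Prod.fst).toFinset := by
          intro s hs
          exact List.mem_toFinset.2 ((planOf_ne_none_iff τ s).1 (htot s hs))
        have h1 : W.S.card ≤ (τ.map Prod.fst).toFinset.card := Finset.card_le_card hSsub
        have h2 : (τ.map Prod.fst).toFinset.card ≤ τ.length := by
          calc (τ.map Prod.fst).toFinset.card ≤ (τ.map Prod.fst).length :=
                List.toFinset_card_le _
            _ = τ.length := List.length_map _
        omega
      · -- take the pass move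
        obtain ⟨θ', ⟨s, u, hsS, hsnone, huU, _, hupd, hpp', hval'⟩, hwins⟩ :=
          h ∅ false (Or.inl ⟨rfl, rfl⟩)
        have hsn : s ∉ τ.map Prod.fst := fun hc => (planOf_ne_none_iff τ s).2 hc hsnone
        have hθ'eq : θ' = planOf (τ ++ [(s, u)]) := by
          rw [hupd, planOf_snoc τ (s, u) hsnone]
        have hfun' : Functional (τ ++ [(s, u)]) := by
          rw [Functional, List.map_append, List.nodup_append]
          exact ⟨hfun, List.nodup_singleton s, by simpa using (fun a x hx has => by subst has; exact hsn (List.mem_map_of_mem (f := Prod.fst) hx) : ∀ (a : σ) (x : υ), (a, x) ∈ τ → ¬a = s)⟩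
        have hmem' : ∀ p ∈ τ ++ [(s, u)], p.1 ∈ W.S := by
          intro p hp
          rcases List.mem_append.1 hp with hp | hp
          · exact hmem p hp
          · simp at hp; subst hp; exact hsS
        have hlen' : (τ ++ [(s, u)]).length + n = W.S.card := by
          simp only [List.length_append, List.length_singleton]; omega
        obtain ⟨ρ', hρlen, hρfun, hρmem, hρvp, hρpp, hρsr⟩ :=
          ih (τ ++ [(s, u)]) hfun' hmem' hlen' (hθ'eq ▸ hpp') (hθ'eq ▸ hwins)
        refine ⟨(s, u) :: ρ', by simp [hρlen], by simpa using hρfun, ?_, ?_, ?_, ?_⟩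
        · intro p hp
          rcases List.mem_cons.1 hp with hp | hp
          · subst hp; exact hsS
          · exact hρmem p hp
        · have : τ ++ (s, u) :: ρ' = (τ ++ [(s, u)]) ++ ρ' := by simp
          rw [this]; exact hρvp
        · intro j hj
          match j with
          | 0 => simpa using hpp
          | j + 1 =>
              have : τ ++ ((s, u) :: ρ').take (j + 1) = (τ ++ [(s, u)]) ++ ρ'.take j := by
                simp
              rw [this]
              exact hρpp j (by omega)
        · intro j hj
          match j with
          | 0 =>
              -- static resiliency of the current projection, via a strike
              simp only [List.take_zero, List.append_nil]
              intro Δ hΔU hΔcard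
              rw [projectSeq_U] at hΔU
              obtain ⟨θ'', ⟨s₀, u₀, hs₀S, hs₀none, hu₀U, hu₀Δ, hupd₀, _, _⟩, hwins₀⟩ :=
                h Δ true (Or.inr ⟨rfl, rfl, Finset.empty_subset Δ, hΔU, by simpa⟩)
              obtain ⟨θs, hθsvp, hext, havoid⟩ := extract_plan W t n Δ θ'' hwins₀
              have hθ''at : ∀ x, θ'' x = if x = s₀ then some u₀ else planOf τ x := by
                intro x
                by_cases hx : x = s₀ <;> simp [hupd₀, Function.update, hx]
              have hθsτ : ∀ p ∈ τ, θs p.1 = some p.2 := by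
                intro p hp
                have h1 : planOf τ p.1 = some p.2 := planOf_mem τ hfun p hp
                have hps₀ : p.1 ≠ s₀ := by
                  intro he
                  rw [he, hs₀none] at h1
                  cases h1
                have h2 : θ'' p.1 = some p.2 := by rw [hθ''at, if_neg hps₀]; exact h1
                rw [hext p.1 (by rw [h2]; simp), h2]
              have hproj := projectSeq_validPlan τ W hW hfun θs hθsvp hθsτ
              refine ⟨_, hproj, ?_⟩
              intro x v hxv
              simp only at hxv
              by_cases hxτ : x ∈ τ.map Prod.fst
              · simp [hxτ] at hxv
              · simp only [if_neg hxτ] at hxv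
                have hτx : planOf τ x = none := planOf_eq_none τ x hxτ
                by_cases hxs₀ : x = s₀
                · subst hxs₀
                  have h2 : θ'' x = some u₀ := by rw [hθ''at, if_pos rfl]
                  have := hext x (by rw [h2]; simp)
                  rw [hxv, h2] at this
                  cases this
                  exact hu₀Δ
                · have h2 : θ'' x = none := by rw [hθ''at, if_neg hxs₀]; exact hτx
                  exact havoid x v h2 hxv
          | j + 1 =>
              have : τ ++ ((s, u) :: ρ').take (j + 1) = (τ ++ [(s, u)]) ++ ρ'.take j := by
                simp
              rw [this]
              exact hρsr j (by omega)

end WAP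
namespace WAP

variable {σ υ : Type} [DecidableEq σ] [DecidableEq υ]
set_option linter.unusedSectionVars false

theorem planOf_take (π : List (σ × υ)) (i : ℕ) :
    planOf (π.take i) = restrictTo (planOf π) ((π.take i).map Prod.fst).toFinset := by
  funext x
  simp only [restrictTo, List.mem_toFinset]
  by_cases hx : x ∈ (π.take i).map Prod.fst
  · simp only [if_pos hx]
    obtain ⟨v, hv⟩ := Option.ne_none_iff_exists'.1 ((planOf_ne_none_iff _ x).2 hx)
    rw [hv]
    have : planOf π x = planOf (π.take i ++ π.drop i) x := by rw [List.take_append_drop]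
    rw [this, planOf_append, hv]
    rfl
  · simp only [if_neg hx]
    exact planOf_eq_none _ x hx

theorem getElem_not_mem_take {α : Type} (l : List α) (hl : l.Nodup) (i : ℕ)
    (h : i < l.length) : l[i] ∉ l.take i := by
  intro hm
  obtain ⟨j, hj, hje⟩ := List.mem_iff_getElem.1 hm
  have hj' : j < i := by simp at hj; omega
  rw [List.getElem_take] at hje
  have := (List.Nodup.getElem_inj_iff hl).1 hje
  omega

/-- Backward direction main induction. -/
theorem backward_main (W : WAP σ υ) (hW : W.WellFormed) (t : ℕ) (π : List (σ × υ))
    (hlen : π.length = W.S.card) (hfun : Functional π)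
    (hvp : W.IsValidPlan (planOf π))
    (hcl : ∀ i ≤ π.length, ∀ s₁ s₂, s₁ ∈ W.S → s₂ ∈ W.S →
      planOf (π.take i) s₁ ≠ none → W.ord s₂ s₁ → s₂ ≠ s₁ →
      planOf (π.take i) s₂ ≠ none)
    (hsr : ∀ i < W.S.card, (W.projectSeq (π.take i)).StaticallyResilient t) :
    ∀ k ≤ W.S.card, OneShotWins W t k ∅ (planOf (π.take (W.S.card - k))) false := by
  intro k
  induction k with
  | zero =>
      intro _
      rw [Nat.sub_zero, ← hlen, List.take_length]
      exact ⟨hvp.1.2, hvp.1.1, hvp.2⟩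
  | succ k ih =>
      intro hk
      set N := W.S.card with hN
      set i := N - (k + 1) with hi
      have hiN : i < N := by omega
      have hiπ : i < π.length := by omega
      set p := π[i] with hp
      have hpmem : p ∈ π := List.getElem_mem hiπ
      have hpval : planOf π p.1 = some p.2 := planOf_mem π hfun p hpmem
      have hpS : p.1 ∈ W.S := (hvp.1.1.1 p.1 p.2 hpval).1
      have hpU : p.2 ∈ W.U := (hvp.1.1.1 p.1 p.2 hpval).2
      have hpnone : planOf (π.take i) p.1 = none := by
        apply planOf_eq_none
        rw [List.map_take]
        intro hc
        exact getElem_not_mem_take (π.map Prod.fst) hfun i (by simpa using hiπ)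
          (by simpa using hc)
      have hfuni : Functional (π.take i) := by
        rw [Functional, List.map_take]
        exact List.Nodup.sublist (List.take_sublist _ _) hfun
      refine Or.inr ⟨⟨p.1, hpS, hpnone⟩, ?_⟩
      rintro Δ' struck' (⟨heq, rfl⟩ | ⟨_, rfl, _, hΔU, hΔcard⟩)
      · -- pass: play π[i]
        rw [heq]
        have htake : π.take (i + 1) = π.take i ++ [p] := by
          rw [List.take_succ, List.getElem?_eq_getElem hiπ]
          rfl
        have hplan' : planOf (π.take (i + 1)) =
            Function.update (planOf (π.take i)) p.1 (some p.2) := by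
          rw [htake, planOf_snoc _ p hpnone]
        obtain ⟨hpp', hval'⟩ := restrict_valid W hW (planOf π) hvp
          ((π.take (i + 1)).map Prod.fst).toFinset (planOf (π.take (i + 1)))
          (planOf_take π (i + 1)) (hcl (i + 1) (by omega))
        have hik : N - k = i + 1 := by omega
        refine ⟨planOf (π.take (i + 1)),
          ⟨p.1, p.2, hpS, hpnone, hpU, Finset.notMem_empty _, hplan', hpp', hval'⟩, ?_⟩
        have := ih (by omega)
        rw [hik] at this
        exact this
      · -- strike with Δ'
        have hsri := hsr i hiN
        rw [Finset.sdiff_empty] at hΔcard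
        obtain ⟨θ'', hθ''vp, hθ''av⟩ := hsri Δ' (by rwa [projectSeq_U]) hΔcard
        have hvalsi : ∀ q ∈ π.take i, planOf π q.1 = some q.2 := by
          intro q hq
          exact planOf_mem π hfun q (List.mem_of_mem_take hq)
        obtain ⟨hcomb, havoid⟩ := combine_validPlan (π.take i) W hW hfuni
          (planOf π) hvp hvalsi θ'' Δ' hθ''vp hθ''av
        set θs : σ → Option υ := fun x => (planOf (π.take i) x <|> θ'' x) with hθsdef
        have hres : planOf (π.take i) = restrictTo θs ((π.take i).map Prod.fst).toFinset := by
          funext x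
          simp only [restrictTo, List.mem_toFinset]
          by_cases hx : x ∈ (π.take i).map Prod.fst
          · simp only [if_pos hx, hθsdef]
            obtain ⟨v, hv⟩ := Option.ne_none_iff_exists'.1 ((planOf_ne_none_iff _ x).2 hx)
            rw [hv]
            rfl
          · simp only [if_neg hx]
            exact planOf_eq_none _ x hx
        have hΔclause : ∀ x v, planOf (π.take i) x = none → θs x = some v → v ∉ Δ' :=
          havoid
        have hcard : (W.S.filter (fun s => planOf (π.take i) s = none)).card ≤ k + 1 := by
          have hFsub : ((π.take i).map Prod.fst).toFinset ⊆ W.S := by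
            intro x hx
            obtain ⟨v, hv⟩ := Option.ne_none_iff_exists'.1
              ((planOf_ne_none_iff _ x).2 (List.mem_toFinset.1 hx))
            have : planOf π x = some v := by
              have h1 : planOf π x = planOf (π.take i ++ π.drop i) x := by
                rw [List.take_append_drop]
              rw [h1, planOf_append, hv]; rfl
            exact (hvp.1.1.1 x v this).1
          have hfeq : W.S.filter (fun s => planOf (π.take i) s = none) =
              W.S \ ((π.take i).map Prod.fst).toFinset := by
            ext x
            simp only [Finset.mem_filter, Finset.mem_sdiff, List.mem_toFinset]
            constructor
            · rintro ⟨hxS, hxn⟩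
              exact ⟨hxS, fun hc => (planOf_ne_none_iff _ x).2 hc hxn⟩
            · rintro ⟨hxS, hxn⟩
              exact ⟨hxS, planOf_eq_none _ x hxn⟩
          have hFcard : ((π.take i).map Prod.fst).toFinset.card = i := by
            rw [List.toFinset_card_of_nodup hfuni]
            simp
            omega
          rw [hfeq, Finset.card_sdiff_of_subset hFsub, hFcard]
          omega
        have hfw := finish_wins W hW t (k + 1) ((π.take i).map Prod.fst).toFinset θs
          (planOf (π.take i)) Δ' hcomb hres (hcl i (by omega)) hΔclause hcard
        rcases hfw with ⟨htot, _, _⟩ | ⟨_, hresp⟩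
        · exact absurd (htot p.1 hpS) (by simp [hpnone])
        · exact hresp Δ' true (Or.inl ⟨rfl, rfl⟩)

end WAP

/-- `W` (with `|S| = N`) is one-shot resilient for budget `t`
if and only if there is a functional sequence `π = (s₁,u₁)⋯(s_N,u_N)` such
that (a) `θ_π` is a valid plan, (b) every prefix of `π` has a causally closed
domain, and (c) for every `0 ≤ i ≤ N−1`, the policy `W_i` obtained from `W`
by successively projecting along the first `i` assignments of `π` is
statically resilient for budget `t`. -/
theorem oneShot_resilient_iff_exists_sequence_of_statically_resilient
    {σ υ : Type} [DecidableEq σ] [DecidableEq υ]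
    (W : WAP σ υ) (hW : W.WellFormed) (t : ℕ) :
    W.OneShotResilient t ↔
      ∃ π : List (σ × υ), π.length = W.S.card ∧ WAP.Functional π ∧
        W.IsValidPlan (WAP.planOf π) ∧
        (∀ i ≤ π.length, ∀ s₁ s₂, s₁ ∈ W.S → s₂ ∈ W.S →
          WAP.planOf (π.take i) s₁ ≠ none → W.ord s₂ s₁ → s₂ ≠ s₁ →
          WAP.planOf (π.take i) s₂ ≠ none) ∧
        ∀ i < W.S.card, (W.projectSeq (π.take i)).StaticallyResilient t := by

  constructor
  · intro h
    have h0 : WAP.planOf ([] : List (σ × υ)) = (fun _ => none) := by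
      funext x; rfl
    obtain ⟨ρ, hlen, hfun, hmem, hvp, hpp, hsr⟩ :=
      WAP.forward_main W hW t W.S.card [] (by simp [WAP.Functional]) (by simp)
        (by simp) (WAP.emptyPlan_partial W) (by rw [h0]; exact h)
    refine ⟨ρ, hlen, by simpa using hfun, by simpa using hvp, ?_, ?_⟩
    · intro i hi
      have := (hpp i (by omega)).2
      simpa using this
    · intro i hi
      have := hsr i hi
      simpa using this
  · rintro ⟨π, hlen, hfun, hvp, hcl, hsr⟩
    have := WAP.backward_main W hW t π hlen hfun hvp hcl hsr W.S.card le_rfl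
    rw [Nat.sub_self, List.take_zero] at this
    have h0 : WAP.planOf ([] : List (σ × υ)) = (fun _ => none) := by
      funext x; rfl
    rw [h0] at this
    exact this
end

section
/- Let G = (V, E) be a finite simple undirected graph with N = |V| ≥ 3, let B ⊆ E, let t = ⌊|B|/2⌋, and let W_{G,B} be the workflow authorization policy constructed from (G, B). Then a plan θ of W_{G,B} is valid if and only if, writing θ(sv_i) = (v_i, j_i) and θ(se_i) = (e_i, l_i) for 1 ≤ i ≤ N, the sequence v₁, e₁, v₂, e₂, …, v_N, e_N is a Hamiltonian cycle of G. In particular, W_{G,B} is satisfiable if and only if G has a Hamiltonian cycle. -/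
section GraphConstruction

open WAP

variable {V : Type} [Fintype V] [DecidableEq V]

/-- A user of `W_{G,B}`: either a vertex user `(v, j)` or an edge user `(e, l)`. -/
abbrev UserGB (V : Type) := Sum (V × ℕ) (Sym2 V × ℕ)

/-- The successor index modulo `N` (so `sv_{i+1}` after `sv_i`, wrapping around). -/
def nextFin {N : ℕ} (i : Fin N) : Fin N :=
  ⟨(i.1 + 1) % N, Nat.mod_lt _ (Nat.lt_of_le_of_lt (Nat.zero_le _) i.isLt)⟩

/-- The type-1 entailment constraint `ent(ρ, s, s')`: the constraint
`({s, s'}, Θ)` where `Θ` is the set of functions `θ : {s, s'} → U` with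
`(θ(s), θ(s')) ∈ ρ`. -/
def entCon {σ υ : Type} [DecidableEq σ] (U : Finset υ) (ρ : υ → υ → Prop)
    (s s' : σ) : Finset σ × Set (σ → Option υ) :=
  ({s, s'},
   {θ | (∀ x, θ x ≠ none ↔ x ∈ ({s, s'} : Finset σ)) ∧
        (∀ x v, θ x = some v → v ∈ U) ∧
        ∃ a b, θ s = some a ∧ θ s' = some b ∧ ρ a b})

/-- The vertex users: `(v, j)` for `v ∈ V` and `1 ≤ j ≤ t+1`. -/
def UVfin (V : Type) [Fintype V] [DecidableEq V] (t : ℕ) : Finset (UserGB V) :=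
  (Finset.univ ×ˢ Finset.Icc 1 (t + 1)).image Sum.inl

/-- The edge users: `(e, l)` for `e ∈ E`, with `1 ≤ l ≤ t+1` if `e ∉ B` and
`l = 1` if `e ∈ B`. -/
def UEfin (G : SimpleGraph V) [DecidableRel G.Adj] (B : Finset (Sym2 V))
    (t : ℕ) : Finset (UserGB V) :=
  (G.edgeFinset.biUnion
    (fun e => ({e} : Finset (Sym2 V)) ×ˢ
      (if e ∈ B then ({1} : Finset ℕ) else Finset.Icc 1 (t + 1)))).image Sum.inr

/-- `incident`: relates an edge user `(e, l)` to a vertex user `(v, j)` where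
`v` is one of the two endpoints of `e`. -/
def incidentRel (G : SimpleGraph V) : UserGB V → UserGB V → Prop :=
  fun a b => ∃ e l v j, a = Sum.inr (e, l) ∧ b = Sum.inl (v, j) ∧
    e ∈ G.edgeSet ∧ v ∈ e

/-- `distinct`: relates vertex users representing distinct vertices. -/
def distinctRel (V : Type) : UserGB V → UserGB V → Prop :=
  fun a b => ∃ v i w j, a = Sum.inl (v, i) ∧ b = Sum.inl (w, j) ∧ v ≠ w

/-- The workflow authorization policy `W_{G,B}` built from a finite simple
graph `G = (V, E)` and an edge set `B ⊆ E`, with budget `t = ⌊|B|/2⌋`.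
Steps: `Sum.inl i` is `sv_{i+1}` and `Sum.inr i` is `se_{i+1}` (0-indexed),
the order `≼` is equality.  Constraints:  `C₁ ∪ C₂ ∪ C₃ ∪ C_ham` where
`C₁ = {ent(incident⁻¹, sv_i, se_i)}`, `C₂ ∪ C₃ = {ent(incident, se_i, sv_{i+1 mod N})}`,
and `C_ham = {ent(distinct, sv_i, sv_j) : i < j}`. -/
def WGB (G : SimpleGraph V) [DecidableRel G.Adj] (B : Finset (Sym2 V)) :
    WAP (Sum (Fin (Fintype.card V)) (Fin (Fintype.card V))) (UserGB V) :=
  { S := Finset.univ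
    ord := Eq
    U := UVfin V (B.card / 2) ∪ UEfin G B (B.card / 2)
    A := {p | match p.1 with
              | Sum.inl _ => p.2 ∈ UVfin V (B.card / 2)
              | Sum.inr _ => p.2 ∈ UEfin G B (B.card / 2)}
    C := {c | ∃ i : Fin (Fintype.card V),
            c = entCon (UVfin V (B.card / 2) ∪ UEfin G B (B.card / 2))
                  (fun a b => incidentRel G b a) (Sum.inl i) (Sum.inr i)} ∪
         {c | ∃ i : Fin (Fintype.card V),
            c = entCon (UVfin V (B.card / 2) ∪ UEfin G B (B.card / 2))
                  (incidentRel G) (Sum.inr i) (Sum.inl (nextFin i))} ∪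
         {c | ∃ i j : Fin (Fintype.card V), i < j ∧
            c = entCon (UVfin V (B.card / 2) ∪ UEfin G B (B.card / 2))
                  (distinctRel V) (Sum.inl i) (Sum.inl j)} }

/-- `v₁, e₁, v₂, e₂, …, v_N, e_N` is a Hamiltonian cycle of `G`: the `v_i`
are pairwise distinct and cover all of `V`, and each `e_i` is an edge of `G`
joining `v_i` and `v_{i+1}` (indices modulo `N`). -/
def IsHamCycle (G : SimpleGraph V) (v : Fin (Fintype.card V) → V)
    (e : Fin (Fintype.card V) → Sym2 V) : Prop :=
  Function.Injective v ∧ (∀ x : V, ∃ i, v i = x) ∧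
  ∀ i, e i ∈ G.edgeSet ∧ e i = s(v i, v (nextFin i))

end GraphConstruction

section Aux

variable {V : Type} [Fintype V] [DecidableEq V]

lemma inl_mem_UVfin {t : ℕ} {v : V} {j : ℕ} :
    Sum.inl (v, j) ∈ UVfin V t ↔ 1 ≤ j ∧ j ≤ t + 1 := by
  simp [UVfin, Prod.ext_iff]

lemma inr_not_mem_UVfin {t : ℕ} {x : Sym2 V × ℕ} :
    Sum.inr x ∉ UVfin V t := by
  simp [UVfin]

lemma inr_mem_UEfin {G : SimpleGraph V} [DecidableRel G.Adj] {B : Finset (Sym2 V)}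
    {t : ℕ} {e : Sym2 V} {l : ℕ} :
    Sum.inr (e, l) ∈ UEfin G B t ↔
      e ∈ G.edgeFinset ∧ l ∈ (if e ∈ B then ({1} : Finset ℕ) else Finset.Icc 1 (t + 1)) := by
  constructor
  · intro h
    simp only [UEfin, Finset.mem_image, Finset.mem_biUnion] at h
    obtain ⟨a, ⟨e', he', ha⟩, hae⟩ := h
    obtain ⟨e'', l''⟩ := a
    simp only [Finset.mem_product, Finset.mem_singleton] at ha
    cases hae
    exact ⟨ha.1 ▸ he', ha.1 ▸ ha.2⟩
  · intro ⟨h1, h2⟩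
    simp only [UEfin, Finset.mem_image, Finset.mem_biUnion]
    exact ⟨(e, l), ⟨e, h1, by simp [h2]⟩, rfl⟩

lemma inl_not_mem_UEfin {G : SimpleGraph V} [DecidableRel G.Adj] {B : Finset (Sym2 V)}
    {t : ℕ} {x : V × ℕ} : Sum.inl x ∉ UEfin G B t := by
  simp [UEfin]

lemma restrict_eq_of_mem {σ υ : Type} [DecidableEq σ] (θ : σ → Option υ) {T : Finset σ}
    {s : σ} (h : s ∈ T) : WAP.restrictTo θ T s = θ s := if_pos h

lemma nextFin_ne {N : ℕ} (hN : 2 ≤ N) (i : Fin N) : nextFin i ≠ i := by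
  intro h
  have h' : (i.1 + 1) % N = i.1 := congrArg Fin.val h
  rcases Nat.lt_or_ge (i.1 + 1) N with hlt | hge
  · rw [Nat.mod_eq_of_lt hlt] at h'; omega
  · have hi := i.isLt
    have : i.1 + 1 = N := by omega
    rw [this, Nat.mod_self] at h'
    omega

end Aux

/-- A plan `θ` of `W_{G,B}` is valid iff, writing
`θ(sv_i) = (v_i, j_i)` and `θ(se_i) = (e_i, l_i)`, the sequence
`v₁, e₁, v₂, e₂, …, v_N, e_N` is a Hamiltonian cycle of `G`.  In
particular, `W_{G,B}` is satisfiable iff `G` has a Hamiltonian cycle. -/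
theorem WGB_valid_iff_hamCycle
    {V : Type} [Fintype V] [DecidableEq V]
    (G : SimpleGraph V) [DecidableRel G.Adj]
    (hN : 3 ≤ Fintype.card V)
    (B : Finset (Sym2 V)) (hB : ↑B ⊆ G.edgeSet) :
    (∀ θ, (WGB G B).IsPlan θ →
      ((WGB G B).Valid θ ↔
        ∃ (v : Fin (Fintype.card V) → V) (e : Fin (Fintype.card V) → Sym2 V),
          (∀ i, ∃ j, θ (Sum.inl i) = some (Sum.inl (v i, j))) ∧
          (∀ i, ∃ l, θ (Sum.inr i) = some (Sum.inr (e i, l))) ∧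
          IsHamCycle G v e)) ∧
    ((∃ θ, (WGB G B).IsValidPlan θ) ↔
      ∃ (v : Fin (Fintype.card V) → V) (e : Fin (Fintype.card V) → Sym2 V),
        IsHamCycle G v e) := by
  set N := Fintype.card V
  set t := B.card / 2 with ht
  set U' := UVfin V t ∪ UEfin G B t with hU'
  have hN2 : 2 ≤ N := le_trans (by norm_num) hN
  have main : ∀ θ, (WGB G B).IsPlan θ →
      ((WGB G B).Valid θ ↔
        ∃ (v : Fin N → V) (e : Fin N → Sym2 V),
          (∀ i, ∃ j, θ (Sum.inl i) = some (Sum.inl (v i, j))) ∧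
          (∀ i, ∃ l, θ (Sum.inr i) = some (Sum.inr (e i, l))) ∧
          IsHamCycle G v e) := by
    intro θ hθ
    have htot : ∀ s, ∃ u, θ s = some u := fun s =>
      Option.ne_none_iff_exists'.mp (hθ.2 s (Finset.mem_univ s))
    constructor
    · -- forward
      intro hval
      have hv' : ∀ i : Fin N, ∃ w j, θ (Sum.inl i) = some (Sum.inl (w, j)) := by
        intro i
        obtain ⟨u, hu⟩ := htot (Sum.inl i)
        have hA : u ∈ UVfin V t := hval.1 _ _ hu
        simp only [UVfin, Finset.mem_image] at hA
        obtain ⟨⟨w, j⟩, -, rfl⟩ := hA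
        exact ⟨w, j, hu⟩
      have he' : ∀ i : Fin N, ∃ f l, θ (Sum.inr i) = some (Sum.inr (f, l)) := by
        intro i
        obtain ⟨u, hu⟩ := htot (Sum.inr i)
        have hA : u ∈ UEfin G B t := hval.1 _ _ hu
        simp only [UEfin, Finset.mem_image] at hA
        obtain ⟨⟨f, l⟩, -, rfl⟩ := hA
        exact ⟨f, l, hu⟩
      choose v jv hv using hv'
      choose e le he using he'
      have hget : ∀ (ρ : UserGB V → UserGB V → Prop) (s s' : Sum (Fin N) (Fin N)),
          entCon U' ρ s s' ∈ (WGB G B).C →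
          ∃ a b, θ s = some a ∧ θ s' = some b ∧ ρ a b := by
        intro ρ s s' hc
        have hdom : ∀ x ∈ (entCon U' ρ s s' :
            Finset (Sum (Fin N) (Fin N)) × Set (Sum (Fin N) (Fin N) → Option (UserGB V))).1,
            θ x ≠ none := fun x _ => hθ.2 x (Finset.mem_univ x)
        have hm := hval.2 _ hc hdom
        obtain ⟨-, -, a, b, ha, hb, hrel⟩ := hm
        rw [restrict_eq_of_mem θ (by simp [entCon])] at ha
        rw [restrict_eq_of_mem θ (by simp [entCon])] at hb
        exact ⟨a, b, ha, hb, hrel⟩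
      have hC1 : ∀ i : Fin N, e i ∈ G.edgeSet ∧ v i ∈ e i := by
        intro i
        obtain ⟨a, b, ha, hb, hrel⟩ := hget (fun a b => incidentRel G b a)
          (Sum.inl i) (Sum.inr i) (Or.inl (Or.inl ⟨i, rfl⟩))
        rw [hv i] at ha; rw [he i] at hb
        obtain ⟨e', l', w, j', hb', ha', hes, hmem⟩ := hrel
        obtain rfl := Option.some.inj ha
        obtain rfl := Option.some.inj hb
        simp only [Sum.inl.injEq, Sum.inr.injEq, Prod.mk.injEq] at ha' hb'
        obtain ⟨rfl, rfl⟩ := ha'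
        obtain ⟨rfl, rfl⟩ := hb'
        exact ⟨hes, hmem⟩
      have hC2 : ∀ i : Fin N, v (nextFin i) ∈ e i := by
        intro i
        obtain ⟨a, b, ha, hb, hrel⟩ := hget (incidentRel G)
          (Sum.inr i) (Sum.inl (nextFin i)) (Or.inl (Or.inr ⟨i, rfl⟩))
        rw [he i] at ha; rw [hv (nextFin i)] at hb
        obtain ⟨e', l', w, j', ha', hb', hes, hmem⟩ := hrel
        obtain rfl := Option.some.inj ha
        obtain rfl := Option.some.inj hb
        simp only [Sum.inl.injEq, Sum.inr.injEq, Prod.mk.injEq] at ha' hb'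
        obtain ⟨rfl, rfl⟩ := ha'
        obtain ⟨rfl, rfl⟩ := hb'
        exact hmem
      have hinj : Function.Injective v := by
        intro i j hij
        by_contra hne
        rcases lt_or_gt_of_ne hne with hlt | hlt
        · obtain ⟨a, b, ha, hb, hrel⟩ := hget (distinctRel V)
            (Sum.inl i) (Sum.inl j) (Or.inr ⟨i, j, hlt, rfl⟩)
          rw [hv i] at ha; rw [hv j] at hb
          obtain ⟨w, i', w', j', ha', hb', hww⟩ := hrel
          obtain rfl := Option.some.inj ha
          obtain rfl := Option.some.inj hb
          simp only [Sum.inl.injEq, Sum.inr.injEq, Prod.mk.injEq] at ha' hb'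
          obtain ⟨rfl, rfl⟩ := ha'
          obtain ⟨rfl, rfl⟩ := hb'
          exact hww hij
        · obtain ⟨a, b, ha, hb, hrel⟩ := hget (distinctRel V)
            (Sum.inl j) (Sum.inl i) (Or.inr ⟨j, i, hlt, rfl⟩)
          rw [hv j] at ha; rw [hv i] at hb
          obtain ⟨w, i', w', j', ha', hb', hww⟩ := hrel
          obtain rfl := Option.some.inj ha
          obtain rfl := Option.some.inj hb
          simp only [Sum.inl.injEq, Sum.inr.injEq, Prod.mk.injEq] at ha' hb'
          obtain ⟨rfl, rfl⟩ := ha'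
          obtain ⟨rfl, rfl⟩ := hb'
          exact hww hij.symm
      have hsurj : Function.Surjective v :=
        ((Fintype.bijective_iff_injective_and_card v).mpr
          ⟨hinj, by simp [N]⟩).2
      refine ⟨v, e, fun i => ⟨jv i, hv i⟩, fun i => ⟨le i, he i⟩,
        hinj, fun x => hsurj x, fun i => ⟨(hC1 i).1, ?_⟩⟩
      have hne : v i ≠ v (nextFin i) := fun h => nextFin_ne hN2 i (hinj h.symm)
      exact ((Sym2.mem_and_mem_iff hne).mp ⟨(hC1 i).2, hC2 i⟩)
    · -- backward
      rintro ⟨v, e, hv, he, hinj, hsurj, hham⟩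
      have hUmem : ∀ s u, θ s = some u → u ∈ U' := fun s u h => (hθ.1.1 s u h).2
      constructor
      · intro s u hu
        cases s with
        | inl i =>
          obtain ⟨j, hj⟩ := hv i
          rw [hu] at hj
          obtain rfl := Option.some.inj hj
          show _ ∈ UVfin V t
          rcases Finset.mem_union.mp (hUmem _ _ hu) with h | h
          · exact h
          · exact absurd h inl_not_mem_UEfin
        | inr i =>
          obtain ⟨l, hl⟩ := he i
          rw [hu] at hl
          obtain rfl := Option.some.inj hl
          show _ ∈ UEfin G B t
          rcases Finset.mem_union.mp (hUmem _ _ hu) with h | h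
          · exact absurd h inr_not_mem_UVfin
          · exact h
      · intro c hc hdom
        have base : ∀ (ρ : UserGB V → UserGB V → Prop) (s s' : Sum (Fin N) (Fin N)),
            θ s ≠ none → θ s' ≠ none →
            (∃ a b, θ s = some a ∧ θ s' = some b ∧ ρ a b) →
            WAP.restrictTo θ (entCon U' ρ s s').1 ∈ (entCon U' ρ s s').2 := by
          rintro ρ s s' hs hs' ⟨a, b, ha, hb, hrel⟩
          refine ⟨?_, ?_, a, b, ?_, ?_, hrel⟩
          · intro x
            constructor
            · intro hx
              by_contra hxm
              simp only [WAP.restrictTo, entCon] at hx hxm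
              exact hx (if_neg hxm)
            · intro hxm
              simp only [WAP.restrictTo, entCon] at hxm ⊢
              exact fun h => hθ.2 x (Finset.mem_univ x) ((if_pos hxm).symm.trans h)
          · intro x u hu
            simp only [WAP.restrictTo] at hu
            split at hu
            · exact hUmem _ _ hu
            · exact absurd hu (by simp)
          · rw [restrict_eq_of_mem θ (by simp [entCon])]; exact ha
          · rw [restrict_eq_of_mem θ (by simp [entCon])]; exact hb
        rcases hc with (⟨i, rfl⟩ | ⟨i, rfl⟩) | ⟨i, j, hij, rfl⟩
        · obtain ⟨jv, hjv⟩ := hv i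
          obtain ⟨l, hl⟩ := he i
          refine base _ _ _ (by simp [hjv]) (by simp [hl])
            ⟨_, _, hjv, hl, e i, l, v i, jv, rfl, rfl, (hham i).1, ?_⟩
          rw [(hham i).2]; exact Sym2.mem_mk_left _ _
        · obtain ⟨l, hl⟩ := he i
          obtain ⟨jv, hjv⟩ := hv (nextFin i)
          refine base _ _ _ (by simp [hl]) (by simp [hjv])
            ⟨_, _, hl, hjv, e i, l, v (nextFin i), jv, rfl, rfl, (hham i).1, ?_⟩
          rw [(hham i).2]; exact Sym2.mem_mk_right _ _
        · obtain ⟨ji, hji⟩ := hv i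
          obtain ⟨jj, hjj⟩ := hv j
          exact base _ _ _ (by simp [hji]) (by simp [hjj])
            ⟨_, _, hji, hjj, v i, ji, v j, jj, rfl, rfl,
              fun h => absurd (hinj h) (ne_of_lt hij)⟩
  refine ⟨main, ⟨?_, ?_⟩⟩
  · rintro ⟨θ, hplan, hval⟩
    obtain ⟨v, e, -, -, hham⟩ := (main θ hplan).mp hval
    exact ⟨v, e, hham⟩
  · rintro ⟨v, e, hham⟩
    set θ0 : Sum (Fin N) (Fin N) → Option (UserGB V) := fun s =>
      match s with
      | Sum.inl i => some (Sum.inl (v i, 1))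
      | Sum.inr i => some (Sum.inr (e i, 1)) with hθ0
    have hplan : (WGB G B).IsPlan θ0 := by
      refine ⟨⟨?_, ?_⟩, ?_⟩
      · intro s u hu
        refine ⟨Finset.mem_univ s, ?_⟩
        cases s with
        | inl i =>
          obtain rfl := Option.some.inj hu
          exact Finset.mem_union_left _ (inl_mem_UVfin.mpr ⟨le_refl 1, by omega⟩)
        | inr i =>
          obtain rfl := Option.some.inj hu
          refine Finset.mem_union_right _ (inr_mem_UEfin.mpr
            ⟨SimpleGraph.mem_edgeFinset.mpr (hham.2.2 i).1, ?_⟩)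
          split <;> simp
      · intro s₁ s₂ _ _ _ h12 hne
        exact absurd h12 hne
      · intro s _
        cases s <;> simp [hθ0]
    exact ⟨θ0, hplan, (main θ0 hplan).mpr
      ⟨v, e, fun i => ⟨1, rfl⟩, fun i => ⟨1, rfl⟩, hham⟩⟩
end
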